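/- arXiv:1906.02176 — 6 statements merged into one kernel-verified Lean document; each statement's English description precedes it below -/
import Mathlib

section
/- Let c < d, ε > 0, and σ : [c,d] → ℝ continuous. Let f, g : [c,d] × [−1,1] → ℝ be continuous, continuously differentiable in x with jointly continuous x-derivatives, and suppose that for all (x,v) ∈ [c,d] × [−1,1]: v ∂ₓf(x,v) = (σ(x)/ε)(Lf)(x,v) (forward transport) and −v ∂ₓg(x,v) = (σ(x)/ε)(Lg)(x,v) (adjoint transport), where (Lw)(x,v) = (1/2)∫_{−1}^{1} w(x,v′) dv′ − w(x,v). Then the boundary flux pairing is conserved: ∫_{−1}^{1} v f(d,v) g(d,v) dv = ∫_{−1}^{1} v f(c,v) g(c,v) dv. -/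
/-- Flux conservation (Green's identity) for the 1D radiative transfer equation on a slab
`[c,d] × [−1,1]`: if `f` solves the forward transport equation
`v ∂ₓf = (σ(x)/ε) L f` and `g` the adjoint transport equation `−v ∂ₓg = (σ(x)/ε) L g`,
with `(L w)(x,v) = (1/2)∫_{−1}^{1} w(x,v′) dv′ − w(x,v)`, then the boundary flux pairing
is conserved: `∫_{−1}^{1} v f(d,v) g(d,v) dv = ∫_{−1}^{1} v f(c,v) g(c,v) dv`. -/
theorem rte_flux_conservation (c d ε : ℝ) (hcd : c < d) (hε : 0 < ε)
    (σ : ℝ → ℝ) (hσ : ContinuousOn σ (Set.Icc c d))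
    (f g fd gd : ℝ → ℝ → ℝ)
    (hf_cont : ContinuousOn (fun q : ℝ × ℝ => f q.1 q.2)
      (Set.Icc c d ×ˢ Set.Icc (-1 : ℝ) 1))
    (hg_cont : ContinuousOn (fun q : ℝ × ℝ => g q.1 q.2)
      (Set.Icc c d ×ˢ Set.Icc (-1 : ℝ) 1))
    (hfd : ∀ x ∈ Set.Icc c d, ∀ v ∈ Set.Icc (-1 : ℝ) 1,
      HasDerivWithinAt (fun x' => f x' v) (fd x v) (Set.Icc c d) x)
    (hgd : ∀ x ∈ Set.Icc c d, ∀ v ∈ Set.Icc (-1 : ℝ) 1,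
      HasDerivWithinAt (fun x' => g x' v) (gd x v) (Set.Icc c d) x)
    (hfd_cont : ContinuousOn (fun q : ℝ × ℝ => fd q.1 q.2)
      (Set.Icc c d ×ˢ Set.Icc (-1 : ℝ) 1))
    (hgd_cont : ContinuousOn (fun q : ℝ × ℝ => gd q.1 q.2)
      (Set.Icc c d ×ˢ Set.Icc (-1 : ℝ) 1))
    (hpde_f : ∀ x ∈ Set.Icc c d, ∀ v ∈ Set.Icc (-1 : ℝ) 1,
      v * fd x v = (σ x / ε) * (((1 / 2) * ∫ v' in (-1 : ℝ)..1, f x v') - f x v))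
    (hpde_g : ∀ x ∈ Set.Icc c d, ∀ v ∈ Set.Icc (-1 : ℝ) 1,
      -v * gd x v = (σ x / ε) * (((1 / 2) * ∫ v' in (-1 : ℝ)..1, g x v') - g x v)) :
    ∫ v in (-1 : ℝ)..1, v * f d v * g d v = ∫ v in (-1 : ℝ)..1, v * f c v * g c v := by
  have hm1 : (-1 : ℝ) ≤ 1 := by norm_num
  set H : ℝ → ℝ → ℝ := fun x v => v * (fd x v * g x v + f x v * gd x v) with hH
  -- continuity helpers
  have hswap : Continuous (fun p : ℝ × ℝ => (p.2, p.1)) := continuous_snd.prodMk continuous_fst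
  have hmaps : Set.MapsTo (fun p : ℝ × ℝ => (p.2, p.1))
      (Set.Icc (-1:ℝ) 1 ×ˢ Set.Icc c d) (Set.Icc c d ×ˢ Set.Icc (-1:ℝ) 1) := by
    rintro ⟨v, x⟩ ⟨hv, hx⟩; exact ⟨hx, hv⟩
  have hHcont : ContinuousOn (fun p : ℝ × ℝ => H p.2 p.1)
      (Set.Icc (-1:ℝ) 1 ×ˢ Set.Icc c d) := by
    have h1 := hfd_cont.comp hswap.continuousOn hmaps
    have h2 := hg_cont.comp hswap.continuousOn hmaps
    have h3 := hf_cont.comp hswap.continuousOn hmaps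
    have h4 := hgd_cont.comp hswap.continuousOn hmaps
    exact (continuous_fst.continuousOn).mul ((h1.mul h2).add (h3.mul h4))
  -- step 1: FTC in x for each fixed v
  have h1 : ∀ v ∈ Set.Icc (-1:ℝ) 1,
      ∫ x in c..d, H x v = v * f d v * g d v - v * f c v * g c v := by
    intro v hv
    have hfc : ContinuousOn (fun x => f x v) (Set.Icc c d) :=
      hf_cont.comp (Continuous.continuousOn (continuous_id.prodMk continuous_const))
        (fun x hx => Set.mk_mem_prod hx hv)
    have hgc : ContinuousOn (fun x => g x v) (Set.Icc c d) :=
      hg_cont.comp (Continuous.continuousOn (continuous_id.prodMk continuous_const))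
        (fun x hx => Set.mk_mem_prod hx hv)
    have hHc : ContinuousOn (fun x => H x v) (Set.Icc c d) := by
      intro x hx
      exact (hHcont.comp (Continuous.continuousOn (continuous_const.prodMk continuous_id))
        (fun y hy => Set.mk_mem_prod hv hy)) x hx
    apply intervalIntegral.integral_eq_sub_of_hasDeriv_right_of_le hcd.le
    · exact ((continuousOn_const.mul hfc).mul hgc)
    · intro x hx
      have hx' : x ∈ Set.Icc c d := Set.mem_Icc_of_Ioo hx
      have hfD : HasDerivAt (fun x' => f x' v) (fd x v) x :=
        (hfd x hx' v hv).hasDerivAt (Icc_mem_nhds hx.1 hx.2)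
      have hgD : HasDerivAt (fun x' => g x' v) (gd x v) x :=
        (hgd x hx' v hv).hasDerivAt (Icc_mem_nhds hx.1 hx.2)
      have : HasDerivAt (fun x' => v * f x' v * g x' v)
          (v * (fd x v * g x v + f x v * gd x v)) x := by
        have := ((hfD.mul hgD).const_mul v)
        simpa only [Pi.mul_apply, mul_assoc] using this
      exact this.hasDerivWithinAt
    · exact (hHc.mono (by rw [Set.uIcc_of_le hcd.le])).intervalIntegrable
  -- step 2: for each x, the v-integral of H vanishes
  have h2 : ∀ x ∈ Set.Icc c d, (∫ v in (-1:ℝ)..1, H x v) = 0 := by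
    intro x hx
    set If := ∫ v' in (-1:ℝ)..1, f x v' with hIf
    set Ig := ∫ v' in (-1:ℝ)..1, g x v' with hIg
    have hfvc : ContinuousOn (fun v => f x v) (Set.Icc (-1:ℝ) 1) :=
      hf_cont.comp (Continuous.continuousOn (continuous_const.prodMk continuous_id))
        (fun v hv => Set.mk_mem_prod hx hv)
    have hgvc : ContinuousOn (fun v => g x v) (Set.Icc (-1:ℝ) 1) :=
      hg_cont.comp (Continuous.continuousOn (continuous_const.prodMk continuous_id))
        (fun v hv => Set.mk_mem_prod hx hv)
    have hfint : IntervalIntegrable (fun v => f x v) MeasureTheory.volume (-1) 1 :=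
      (hfvc.mono (by rw [Set.uIcc_of_le hm1])).intervalIntegrable
    have hgint : IntervalIntegrable (fun v => g x v) MeasureTheory.volume (-1) 1 :=
      (hgvc.mono (by rw [Set.uIcc_of_le hm1])).intervalIntegrable
    have key : ∀ v ∈ Set.Icc (-1:ℝ) 1,
        H x v = (σ x / ε) * ((1/2) * If * g x v - (1/2) * Ig * f x v) := by
      intro v hv
      have e1 := hpde_f x hx v hv
      have e2 := hpde_g x hx v hv
      rw [← hIf] at e1
      rw [← hIg] at e2
      show v * (fd x v * g x v + f x v * gd x v) = _
      linear_combination g x v * e1 - f x v * e2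
    have : (∫ v in (-1:ℝ)..1, H x v)
        = ∫ v in (-1:ℝ)..1, (σ x / ε) * ((1/2) * If * g x v - (1/2) * Ig * f x v) := by
      apply intervalIntegral.integral_congr
      intro v hv
      exact key v (by rwa [Set.uIcc_of_le hm1] at hv)
    rw [this, intervalIntegral.integral_const_mul, intervalIntegral.integral_sub
        (hgint.const_mul _) (hfint.const_mul _),
      intervalIntegral.integral_const_mul, intervalIntegral.integral_const_mul]
    rw [← hIf, ← hIg]
    ring
  -- step 3: Fubini
  have hIoc : Set.Ioc (-1:ℝ) 1 ×ˢ Set.Ioc c d ⊆ Set.Icc (-1:ℝ) 1 ×ˢ Set.Icc c d :=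
    Set.prod_mono Set.Ioc_subset_Icc_self Set.Ioc_subset_Icc_self
  have hHint : MeasureTheory.Integrable (fun p : ℝ × ℝ => H p.2 p.1)
      ((MeasureTheory.volume.restrict (Set.Ioc (-1:ℝ) 1)).prod
        (MeasureTheory.volume.restrict (Set.Ioc c d))) := by
    rw [MeasureTheory.Measure.prod_restrict]
    have : MeasureTheory.IntegrableOn (fun p : ℝ × ℝ => H p.2 p.1)
        (Set.Icc (-1:ℝ) 1 ×ˢ Set.Icc c d) (MeasureTheory.volume.prod MeasureTheory.volume) := by
      rw [← MeasureTheory.Measure.volume_eq_prod]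
      exact hHcont.integrableOn_compact (isCompact_Icc.prod isCompact_Icc)
    exact this.mono_set hIoc
  have hswapped :
      (∫ v in Set.Ioc (-1:ℝ) 1, ∫ x in Set.Ioc c d, H x v)
        = ∫ x in Set.Ioc c d, ∫ v in Set.Ioc (-1:ℝ) 1, H x v := by
    exact MeasureTheory.integral_integral_swap hHint
  -- assemble
  have hbd : ∀ v ∈ Set.Icc (-1:ℝ) 1, ContinuousOn (fun v' => v' * f d v' * g d v') (Set.Icc (-1:ℝ) 1) := by
    intro v hv
    exact (continuousOn_id.mul (hf_cont.comp (Continuous.continuousOn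
      (continuous_const.prodMk continuous_id)) (fun v hv => Set.mk_mem_prod (Set.right_mem_Icc.2 hcd.le) hv))).mul
      (hg_cont.comp (Continuous.continuousOn (continuous_const.prodMk continuous_id))
        (fun v hv => Set.mk_mem_prod (Set.right_mem_Icc.2 hcd.le) hv))
  have hintd : IntervalIntegrable (fun v => v * f d v * g d v) MeasureTheory.volume (-1) 1 := by
    refine ContinuousOn.intervalIntegrable ?_
    rw [Set.uIcc_of_le hm1]
    exact hbd 0 (by norm_num)
  have hintc : IntervalIntegrable (fun v => v * f c v * g c v) MeasureTheory.volume (-1) 1 := by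
    refine ContinuousOn.intervalIntegrable ?_
    rw [Set.uIcc_of_le hm1]
    exact (continuousOn_id.mul (hf_cont.comp (Continuous.continuousOn
      (continuous_const.prodMk continuous_id)) (fun v hv => Set.mk_mem_prod (Set.left_mem_Icc.2 hcd.le) hv))).mul
      (hg_cont.comp (Continuous.continuousOn (continuous_const.prodMk continuous_id))
        (fun v hv => Set.mk_mem_prod (Set.left_mem_Icc.2 hcd.le) hv))
  have main : (∫ v in (-1:ℝ)..1, (v * f d v * g d v - v * f c v * g c v)) = 0 := by
    have e1 : (∫ v in (-1:ℝ)..1, (v * f d v * g d v - v * f c v * g c v))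
        = ∫ v in (-1:ℝ)..1, ∫ x in c..d, H x v := by
      apply intervalIntegral.integral_congr
      intro v hv
      rw [Set.uIcc_of_le hm1] at hv
      exact (h1 v hv).symm
    rw [e1]
    rw [intervalIntegral.integral_of_le hm1]
    have e2 : (∫ v in Set.Ioc (-1:ℝ) 1, ∫ x in c..d, H x v)
        = ∫ v in Set.Ioc (-1:ℝ) 1, ∫ x in Set.Ioc c d, H x v := by
      apply MeasureTheory.setIntegral_congr_fun measurableSet_Ioc
      intro v _
      simp [intervalIntegral.integral_of_le hcd.le]
    rw [e2, hswapped]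
    have e3 : (∫ x in Set.Ioc c d, ∫ v in Set.Ioc (-1:ℝ) 1, H x v)
        = ∫ x in Set.Ioc c d, (0:ℝ) := by
      apply MeasureTheory.setIntegral_congr_fun measurableSet_Ioc
      intro x hx
      have := h2 x (Set.Ioc_subset_Icc_self hx)
      rw [intervalIntegral.integral_of_le hm1] at this
      simpa using this
    rw [e3]
    simp
  have := intervalIntegral.integral_sub hintd hintc
  rw [main] at this
  linarith [this.symm]
end

section
/- (Adjoint of the restricted solution map, 1D form.) Let a < b, ε > 0, and σ : [a,b] → ℝ continuous. Let u, h, g̃ : [a,b] × [−1,1] → ℝ be continuous, with u and h continuously differentiable in x with jointly continuous x-derivatives, and suppose: (i) v ∂ₓu(x,v) = (σ(x)/ε)(Lu)(x,v) for all (x,v); (ii) −v ∂ₓh(x,v) − (σ(x)/ε)(Lh)(x,v) = g̃(x,v) for all (x,v); (iii) h(a,v) = 0 for v ∈ (−1,0) and h(b,v) = 0 for v ∈ (0,1) (h vanishes on the outflow boundary Γ₊). Then ∫_a^b ∫_{−1}^{1} g̃(x,v) u(x,v) dv dx = ∫_0^1 v u(a,v) h(a,v) dv + ∫_{−1}^0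 |v| u(b,v) h(b,v) dv. -/
open MeasureTheory Set

private lemma rte_sliceL {f : ℝ → ℝ → ℝ} {s t : Set ℝ}
    (hf : ContinuousOn (fun q : ℝ × ℝ => f q.1 q.2) (s ×ˢ t)) {x : ℝ} (hx : x ∈ s) :
    ContinuousOn (fun v => f x v) t :=
  hf.comp (Continuous.continuousOn (continuous_const.prodMk continuous_id))
    (fun v hv => ⟨hx, hv⟩)

private lemma rte_sliceR {f : ℝ → ℝ → ℝ} {s t : Set ℝ}
    (hf : ContinuousOn (fun q : ℝ × ℝ => f q.1 q.2) (s ×ˢ t)) {v : ℝ} (hv : v ∈ t) :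
    ContinuousOn (fun x => f x v) s :=
  hf.comp (Continuous.continuousOn (continuous_id.prodMk continuous_const))
    (fun x hx => ⟨hx, hv⟩)

/-- Adjoint of the restricted solution map, 1D form (Theorem 3.3 of the paper).
If `u` solves the forward RTE `v ∂ₓu = (σ/ε) L u` on `[a,b] × [−1,1]`, and `h` solves the
adjoint RTE with source `g̃`, i.e. `−v ∂ₓh − (σ/ε) L h = g̃`, with `h` vanishing on the
outflow boundary (`h(a,v) = 0` for `v ∈ (−1,0)` and `h(b,v) = 0` for `v ∈ (0,1)`), then
`∫∫ g̃ u = ∫₀¹ v u(a,v) h(a,v) dv + ∫_{−1}^0 |v| u(b,v) h(b,v) dv`. -/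
theorem rte_adjoint_solution_map (a b ε : ℝ) (hab : a < b) (hε : 0 < ε)
    (σ : ℝ → ℝ) (hσ : ContinuousOn σ (Set.Icc a b))
    (u h gtil ud hd : ℝ → ℝ → ℝ)
    (hu_cont : ContinuousOn (fun q : ℝ × ℝ => u q.1 q.2)
      (Set.Icc a b ×ˢ Set.Icc (-1 : ℝ) 1))
    (hh_cont : ContinuousOn (fun q : ℝ × ℝ => h q.1 q.2)
      (Set.Icc a b ×ˢ Set.Icc (-1 : ℝ) 1))
    (hgtil_cont : ContinuousOn (fun q : ℝ × ℝ => gtil q.1 q.2)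
      (Set.Icc a b ×ˢ Set.Icc (-1 : ℝ) 1))
    (hud : ∀ x ∈ Set.Icc a b, ∀ v ∈ Set.Icc (-1 : ℝ) 1,
      HasDerivWithinAt (fun x' => u x' v) (ud x v) (Set.Icc a b) x)
    (hhd : ∀ x ∈ Set.Icc a b, ∀ v ∈ Set.Icc (-1 : ℝ) 1,
      HasDerivWithinAt (fun x' => h x' v) (hd x v) (Set.Icc a b) x)
    (hud_cont : ContinuousOn (fun q : ℝ × ℝ => ud q.1 q.2)
      (Set.Icc a b ×ˢ Set.Icc (-1 : ℝ) 1))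
    (hhd_cont : ContinuousOn (fun q : ℝ × ℝ => hd q.1 q.2)
      (Set.Icc a b ×ˢ Set.Icc (-1 : ℝ) 1))
    (hpde_u : ∀ x ∈ Set.Icc a b, ∀ v ∈ Set.Icc (-1 : ℝ) 1,
      v * ud x v = (σ x / ε) * (((1 / 2) * ∫ v' in (-1 : ℝ)..1, u x v') - u x v))
    (hpde_h : ∀ x ∈ Set.Icc a b, ∀ v ∈ Set.Icc (-1 : ℝ) 1,
      -v * hd x v - (σ x / ε) * (((1 / 2) * ∫ v' in (-1 : ℝ)..1, h x v') - h x v)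
        = gtil x v)
    (hout_a : ∀ v ∈ Set.Ioo (-1 : ℝ) 0, h a v = 0)
    (hout_b : ∀ v ∈ Set.Ioo (0 : ℝ) 1, h b v = 0) :
    ∫ x in a..b, ∫ v in (-1 : ℝ)..1, gtil x v * u x v
      = (∫ v in (0 : ℝ)..1, v * u a v * h a v)
        + ∫ v in (-1 : ℝ)..0, |v| * u b v * h b v := by
  have hle : a ≤ b := hab.le
  have h01 : (-1 : ℝ) ≤ 1 := by norm_num
  have ha_mem : a ∈ Set.Icc a b := ⟨le_refl a, hle⟩
  have hb_mem : b ∈ Set.Icc a b := ⟨hle, le_refl b⟩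
  -- Step A: pointwise (in x) identity for the inner v-integral.
  have keyA : ∀ x ∈ Set.Icc a b,
      (∫ v in (-1:ℝ)..1, gtil x v * u x v)
        = - ∫ v in (-1:ℝ)..1, v * (hd x v * u x v + h x v * ud x v) := by
    intro x hx
    have hcu : ContinuousOn (fun v => u x v) (Set.Icc (-1:ℝ) 1) := rte_sliceL hu_cont hx
    have hch : ContinuousOn (fun v => h x v) (Set.Icc (-1:ℝ) 1) := rte_sliceL hh_cont hx
    have hcud : ContinuousOn (fun v => ud x v) (Set.Icc (-1:ℝ) 1) := rte_sliceL hud_cont hx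
    have hchd : ContinuousOn (fun v => hd x v) (Set.Icc (-1:ℝ) 1) := rte_sliceL hhd_cont hx
    have iu : IntervalIntegrable (fun v => u x v) volume (-1) 1 :=
      hcu.intervalIntegrable_of_Icc h01
    have ih : IntervalIntegrable (fun v => h x v) volume (-1) 1 :=
      hch.intervalIntegrable_of_Icc h01
    have i3 : IntervalIntegrable
        (fun v => v * (hd x v * u x v + h x v * ud x v)) volume (-1) 1 :=
      (((continuousOn_id.mul ((hchd.mul hcu).add (hch.mul hcud)))).intervalIntegrable_of_Icc h01)
    have hptw : Set.EqOn (fun v => gtil x v * u x v)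
        (fun v => ((-(σ x / ε / 2) * (∫ v' in (-1:ℝ)..1, h x v')) * u x v
            + ((σ x / ε / 2) * (∫ v' in (-1:ℝ)..1, u x v')) * h x v)
          - v * (hd x v * u x v + h x v * ud x v)) (Set.uIcc (-1:ℝ) 1) := by
      intro v hv
      rw [Set.uIcc_of_le h01] at hv
      have e1 := hpde_h x hx v hv
      have e2 := hpde_u x hx v hv
      simp only
      linear_combination (-(u x v)) * e1 + (h x v) * e2
    rw [intervalIntegral.integral_congr hptw]
    rw [intervalIntegral.integral_sub
      ((iu.const_mul _).add (ih.const_mul _)) i3]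
    rw [intervalIntegral.integral_add (iu.const_mul _) (ih.const_mul _),
      intervalIntegral.integral_const_mul, intervalIntegral.integral_const_mul]
    ring
  -- Step B: fundamental theorem of calculus in x, for fixed v.
  have keyB : ∀ v ∈ Set.Icc (-1:ℝ) 1,
      (∫ x in a..b, (hd x v * u x v + h x v * ud x v))
        = h b v * u b v - h a v * u a v := by
    intro v hv
    have hcont : ContinuousOn (fun x => h x v * u x v) (Set.Icc a b) :=
      (rte_sliceR hh_cont hv).mul (rte_sliceR hu_cont hv)
    have hderiv : ∀ x ∈ Set.Ioo a b,
        HasDerivWithinAt (fun x' => h x' v * u x' v)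
          (hd x v * u x v + h x v * ud x v) (Set.Ioi x) x := by
      intro x hx
      have hmem : Set.Icc a b ∈ nhds x := Icc_mem_nhds hx.1 hx.2
      have h1 := (hhd x (Set.Ioo_subset_Icc_self hx) v hv).hasDerivAt hmem
      have h2 := (hud x (Set.Ioo_subset_Icc_self hx) v hv).hasDerivAt hmem
      exact (h1.mul h2).hasDerivWithinAt
    have hint : IntervalIntegrable
        (fun x => hd x v * u x v + h x v * ud x v) volume a b :=
      (((rte_sliceR hhd_cont hv).mul (rte_sliceR hu_cont hv)).add
        ((rte_sliceR hh_cont hv).mul (rte_sliceR hud_cont hv))).intervalIntegrable_of_Icc hle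
    exact intervalIntegral.integral_eq_sub_of_hasDeriv_right_of_le hle hcont hderiv hint
  -- Fubini for continuous integrands on the compact rectangle.
  have swap : ∀ (f : ℝ → ℝ → ℝ),
      ContinuousOn (fun q : ℝ × ℝ => f q.1 q.2) (Set.Icc a b ×ˢ Set.Icc (-1:ℝ) 1) →
      (∫ x in a..b, ∫ v in (-1:ℝ)..1, f x v)
        = ∫ v in (-1:ℝ)..1, ∫ x in a..b, f x v := by
    intro f hf
    have hIcc : IntegrableOn (Function.uncurry f)
        (Set.Icc a b ×ˢ Set.Icc (-1:ℝ) 1) volume :=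
      ContinuousOn.integrableOn_compact (isCompact_Icc.prod isCompact_Icc) hf
    have hIoc : IntegrableOn (Function.uncurry f)
        (Set.Ioc a b ×ˢ Set.Ioc (-1:ℝ) 1) volume :=
      hIcc.mono_set (Set.prod_mono Set.Ioc_subset_Icc_self Set.Ioc_subset_Icc_self)
    have hint : Integrable (Function.uncurry f)
        ((volume.restrict (Set.Ioc a b)).prod (volume.restrict (Set.Ioc (-1:ℝ) 1))) := by
      rw [Measure.prod_restrict, ← Measure.volume_eq_prod]
      exact hIoc
    simp only [intervalIntegral.integral_of_le hle, intervalIntegral.integral_of_le h01]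
    exact MeasureTheory.integral_integral_swap hint
  have hF_cont : ContinuousOn
      (fun q : ℝ × ℝ => q.2 * (hd q.1 q.2 * u q.1 q.2 + h q.1 q.2 * ud q.1 q.2))
      (Set.Icc a b ×ˢ Set.Icc (-1:ℝ) 1) :=
    (continuous_snd.continuousOn).mul ((hhd_cont.mul hu_cont).add (hh_cont.mul hud_cont))
  -- integrability of the boundary integrands
  have hcua : ContinuousOn (fun v => v * u a v * h a v) (Set.Icc (-1:ℝ) 1) :=
    (continuousOn_id.mul (rte_sliceL hu_cont ha_mem)).mul (rte_sliceL hh_cont ha_mem)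
  have hcub : ContinuousOn (fun v => v * u b v * h b v) (Set.Icc (-1:ℝ) 1) :=
    (continuousOn_id.mul (rte_sliceL hu_cont hb_mem)).mul (rte_sliceL hh_cont hb_mem)
  have iua : IntervalIntegrable (fun v => v * u a v * h a v) volume (-1) 1 :=
    hcua.intervalIntegrable_of_Icc h01
  have iub : IntervalIntegrable (fun v => v * u b v * h b v) volume (-1) 1 :=
    hcub.intervalIntegrable_of_Icc h01
  have iua0 : IntervalIntegrable (fun v => v * u a v * h a v) volume (-1) 0 :=
    (hcua.mono (Set.Icc_subset_Icc (le_refl _) (by norm_num))).intervalIntegrable_of_Icc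
      (by norm_num)
  have iua1 : IntervalIntegrable (fun v => v * u a v * h a v) volume 0 1 :=
    (hcua.mono (Set.Icc_subset_Icc (by norm_num) (le_refl _))).intervalIntegrable_of_Icc
      (by norm_num)
  have iub0 : IntervalIntegrable (fun v => v * u b v * h b v) volume (-1) 0 :=
    (hcub.mono (Set.Icc_subset_Icc (le_refl _) (by norm_num))).intervalIntegrable_of_Icc
      (by norm_num)
  have iub1 : IntervalIntegrable (fun v => v * u b v * h b v) volume 0 1 :=
    (hcub.mono (Set.Icc_subset_Icc (by norm_num) (le_refl _))).intervalIntegrable_of_Icc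
      (by norm_num)
  -- boundary simplifications
  have hBa : (∫ v in (-1:ℝ)..1, v * u a v * h a v)
      = ∫ v in (0:ℝ)..1, v * u a v * h a v := by
    rw [← intervalIntegral.integral_add_adjacent_intervals iua0 iua1]
    have hz : (∫ v in (-1:ℝ)..0, v * u a v * h a v) = 0 := by
      rw [intervalIntegral.integral_of_le (by norm_num : (-1:ℝ) ≤ 0),
        MeasureTheory.integral_Ioc_eq_integral_Ioo]
      rw [MeasureTheory.setIntegral_congr_fun measurableSet_Ioo
        (g := fun _ => (0:ℝ)) (fun v hv => by simp [hout_a v hv])]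
      simp
    rw [hz, zero_add]
  have hBb : (∫ v in (-1:ℝ)..1, v * u b v * h b v)
      = ∫ v in (-1:ℝ)..0, v * u b v * h b v := by
    rw [← intervalIntegral.integral_add_adjacent_intervals iub0 iub1]
    have hz : (∫ v in (0:ℝ)..1, v * u b v * h b v) = 0 := by
      rw [intervalIntegral.integral_of_le (by norm_num : (0:ℝ) ≤ 1),
        MeasureTheory.integral_Ioc_eq_integral_Ioo]
      rw [MeasureTheory.setIntegral_congr_fun measurableSet_Ioo
        (g := fun _ => (0:ℝ)) (fun v hv => by simp [hout_b v hv])]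
      simp
    rw [hz, add_zero]
  have habs : (∫ v in (-1:ℝ)..0, |v| * u b v * h b v)
      = - ∫ v in (-1:ℝ)..0, v * u b v * h b v := by
    rw [← intervalIntegral.integral_neg]
    rw [intervalIntegral.integral_of_le (by norm_num : (-1:ℝ) ≤ 0),
      intervalIntegral.integral_of_le (by norm_num : (-1:ℝ) ≤ 0),
      MeasureTheory.integral_Ioc_eq_integral_Ioo,
      MeasureTheory.integral_Ioc_eq_integral_Ioo]
    refine MeasureTheory.setIntegral_congr_fun measurableSet_Ioo (fun v hv => ?_)
    have : |v| = -v := abs_of_neg hv.2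
    simp only [this]; ring
  -- Assemble everything.
  calc ∫ x in a..b, ∫ v in (-1:ℝ)..1, gtil x v * u x v
      = ∫ x in a..b, - ∫ v in (-1:ℝ)..1, v * (hd x v * u x v + h x v * ud x v) := by
        refine intervalIntegral.integral_congr (fun x hx => ?_)
        rw [Set.uIcc_of_le hle] at hx
        exact keyA x hx
    _ = - ∫ x in a..b, ∫ v in (-1:ℝ)..1, v * (hd x v * u x v + h x v * ud x v) := by
        rw [intervalIntegral.integral_neg]
    _ = - ∫ v in (-1:ℝ)..1, ∫ x in a..b, v * (hd x v * u x v + h x v * ud x v) := by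
        rw [swap (fun x v => v * (hd x v * u x v + h x v * ud x v)) hF_cont]
    _ = - ∫ v in (-1:ℝ)..1, v * (h b v * u b v - h a v * u a v) := by
        congr 1
        refine intervalIntegral.integral_congr (fun v hv => ?_)
        rw [Set.uIcc_of_le h01] at hv
        rw [intervalIntegral.integral_const_mul, keyB v hv]
    _ = ∫ v in (-1:ℝ)..1, (v * u a v * h a v - v * u b v * h b v) := by
        rw [← intervalIntegral.integral_neg]
        refine intervalIntegral.integral_congr (fun v hv => ?_)
        ring
    _ = (∫ v in (-1:ℝ)..1, v * u a v * h a v) - ∫ v in (-1:ℝ)..1, v * u b v * h b v := by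
        rw [intervalIntegral.integral_sub iua iub]
    _ = (∫ v in (0:ℝ)..1, v * u a v * h a v)
        + ∫ v in (-1:ℝ)..0, |v| * u b v * h b v := by
        rw [hBa, hBb, habs]; ring
end

section
/- (Adjointness of the boundary-to-boundary map, 1D form.) Let a < c < d < b, ε > 0, σ : [a,b] → ℝ continuous, and let L w(x,v) = (1/2)∫_{−1}^{1} w(x,v′) dv′ − w(x,v). Let u : [a,b]×[−1,1] → ℝ, g : [c,d]×[−1,1] → ℝ, and h : ([a,c] ∪ [d,b])×[−1,1] → ℝ be continuous, continuously differentiable in x with jointly continuous x-derivatives on their domains, and let ψ : [−1,1] → ℝ. Assume: (i) v ∂ₓu = (σ/ε) Lu on [a,b]×[−1,1]; (ii) −v ∂ₓg = (σ/ε) Lg on [c,d]×[−1,1] with g(d,v) = ψ(v) + h(d,v) for v ∈ (0,1) and g(c,v) = ψ(v) + h(c,v) for v ∈ (−1,0); (iii) −v ∂ₓh = (σ/ε) Lh on [a,c]×[−1,1] and on [d,b]×[−1,1], with h(c,v) = g(c,v) for v ∈ (0,1), h(d,v) = g(d,v) for v ∈ (−1,0), h(a,v) = 0 for v ∈ (−1,0),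 and h(b,v) = 0 for v ∈ (0,1). Then ∫_0^1 v u(d,v) ψ(v) dv + ∫_{−1}^0 |v| u(c,v) ψ(v) dv = ∫_0^1 v u(a,v) h(a,v) dv + ∫_{−1}^0 |v| u(b,v) h(b,v) dv. -/
open MeasureTheory Set intervalIntegral

set_option maxHeartbeats 1000000

/-- Interval integrals agree if integrands agree on the open interval. -/
lemma integral_congr_Ioo {s t : ℝ} (hst : s ≤ t) {f g : ℝ → ℝ}
    (h : ∀ v ∈ Set.Ioo s t, f v = g v) :
    ∫ v in s..t, f v = ∫ v in s..t, g v := by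
  apply intervalIntegral.integral_congr_ae
  have ht : ∀ᵐ v : ℝ, v ∉ ({t} : Set ℝ) :=
    compl_mem_ae_iff.mpr (measure_singleton t)
  filter_upwards [ht] with v hv hmem
  rw [Set.uIoc_of_le hst] at hmem
  exact h v ⟨hmem.1, lt_of_le_of_ne hmem.2 (by simpa using hv)⟩

/-- Conservation of the weighted flux for a forward/adjoint RTE pair. -/
lemma flux_const (p q ε : ℝ) (hpq : p ≤ q) (hε : 0 < ε)
    (σ : ℝ → ℝ) (u w ud wd : ℝ → ℝ → ℝ)
    (hu : ContinuousOn (fun z : ℝ × ℝ => u z.1 z.2) (Set.Icc p q ×ˢ Set.Icc (-1:ℝ) 1))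
    (hw : ContinuousOn (fun z : ℝ × ℝ => w z.1 z.2) (Set.Icc p q ×ˢ Set.Icc (-1:ℝ) 1))
    (hudc : ContinuousOn (fun z : ℝ × ℝ => ud z.1 z.2) (Set.Icc p q ×ˢ Set.Icc (-1:ℝ) 1))
    (hwdc : ContinuousOn (fun z : ℝ × ℝ => wd z.1 z.2) (Set.Icc p q ×ˢ Set.Icc (-1:ℝ) 1))
    (hud : ∀ x ∈ Set.Icc p q, ∀ v ∈ Set.Icc (-1:ℝ) 1,
      HasDerivWithinAt (fun x' => u x' v) (ud x v) (Set.Icc p q) x)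
    (hwd : ∀ x ∈ Set.Icc p q, ∀ v ∈ Set.Icc (-1:ℝ) 1,
      HasDerivWithinAt (fun x' => w x' v) (wd x v) (Set.Icc p q) x)
    (hpu : ∀ x ∈ Set.Icc p q, ∀ v ∈ Set.Icc (-1:ℝ) 1,
      v * ud x v = (σ x / ε) * (((1 / 2) * ∫ v' in (-1:ℝ)..1, u x v') - u x v))
    (hpw : ∀ x ∈ Set.Icc p q, ∀ v ∈ Set.Icc (-1:ℝ) 1,
      v * wd x v = -((σ x / ε) * (((1 / 2) * ∫ v' in (-1:ℝ)..1, w x v') - w x v))) :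
    (∫ v in (-1:ℝ)..1, v * u q v * w q v) = ∫ v in (-1:ℝ)..1, v * u p v * w p v := by
  have h1 : (-1:ℝ) ≤ 1 := by norm_num
  have hp : p ∈ Set.Icc p q := ⟨le_refl p, hpq⟩
  have hq : q ∈ Set.Icc p q := ⟨hpq, le_refl q⟩
  -- slices in v for fixed x
  have slicev : ∀ (f : ℝ → ℝ → ℝ),
      ContinuousOn (fun z : ℝ × ℝ => f z.1 z.2) (Set.Icc p q ×ˢ Set.Icc (-1:ℝ) 1) →
      ∀ x ∈ Set.Icc p q, ContinuousOn (fun v => f x v) (Set.Icc (-1:ℝ) 1) := by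
    intro f hf x hx
    exact hf.comp (Continuous.continuousOn (continuous_const.prodMk continuous_id))
      (fun v hv => Set.mk_mem_prod hx hv)
  -- slices in x for fixed v
  have slicex : ∀ (f : ℝ → ℝ → ℝ),
      ContinuousOn (fun z : ℝ × ℝ => f z.1 z.2) (Set.Icc p q ×ˢ Set.Icc (-1:ℝ) 1) →
      ∀ v ∈ Set.Icc (-1:ℝ) 1, ContinuousOn (fun x => f x v) (Set.Icc p q) := by
    intro f hf v hv
    exact hf.comp (Continuous.continuousOn (continuous_id.prodMk continuous_const))
      (fun x hx => Set.mk_mem_prod hx hv)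
  set D : ℝ → ℝ → ℝ := fun x v => v * (ud x v * w x v + u x v * wd x v) with hD
  -- the integrand D is continuous in (v, x) on the swapped product
  have hDcont : ContinuousOn (fun z : ℝ × ℝ => D z.2 z.1)
      (Set.Icc (-1:ℝ) 1 ×ˢ Set.Icc p q) := by
    have hswap : ∀ (f : ℝ → ℝ → ℝ),
        ContinuousOn (fun z : ℝ × ℝ => f z.1 z.2) (Set.Icc p q ×ˢ Set.Icc (-1:ℝ) 1) →
        ContinuousOn (fun z : ℝ × ℝ => f z.2 z.1) (Set.Icc (-1:ℝ) 1 ×ˢ Set.Icc p q) := by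
      intro f hf
      exact hf.comp continuous_swap.continuousOn
        (fun z hz => Set.mk_mem_prod hz.2 hz.1)
    exact continuousOn_fst.mul
      (((hswap ud hudc).mul (hswap w hw)).add ((hswap u hu).mul (hswap wd hwdc)))
  -- FTC in x for each fixed v
  have ftc : ∀ v ∈ Set.Icc (-1:ℝ) 1,
      (∫ x in p..q, D x v) = v * u q v * w q v - v * u p v * w p v := by
    intro v hv
    have hcontf : ContinuousOn (fun x => v * (u x v * w x v)) (Set.Icc p q) :=
      (continuousOn_const.mul ((slicex u hu v hv).mul (slicex w hw v hv)))
    have hderiv : ∀ x ∈ Set.Ioo p q,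
        HasDerivWithinAt (fun x' => v * (u x' v * w x' v)) (D x v) (Set.Ioi x) x := by
      intro x hx
      have hnx : Set.Icc p q ∈ nhds x := Icc_mem_nhds hx.1 hx.2
      have h1' : HasDerivAt (fun x' => u x' v) (ud x v) x :=
        (hud x (Set.Ioo_subset_Icc_self hx) v hv).hasDerivAt hnx
      have h2' : HasDerivAt (fun x' => w x' v) (wd x v) x :=
        (hwd x (Set.Ioo_subset_Icc_self hx) v hv).hasDerivAt hnx
      exact (((h1'.mul h2')).const_mul v).hasDerivWithinAt
    have hint : IntervalIntegrable (fun x => D x v) volume p q := by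
      apply ContinuousOn.intervalIntegrable
      rw [Set.uIcc_of_le hpq]
      exact continuousOn_const.mul
        (((slicex ud hudc v hv).mul (slicex w hw v hv)).add
          ((slicex u hu v hv).mul (slicex wd hwdc v hv)))
    have := intervalIntegral.integral_eq_sub_of_hasDeriv_right_of_le hpq hcontf hderiv hint
    rw [this]; ring
  -- integrability of slices at p, q
  have intq : IntervalIntegrable (fun v => v * u q v * w q v) volume (-1) 1 := by
    apply ContinuousOn.intervalIntegrable
    rw [Set.uIcc_of_le h1]
    exact (continuousOn_id.mul (slicev u hu q hq)).mul (slicev w hw q hq)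
  have intp : IntervalIntegrable (fun v => v * u p v * w p v) volume (-1) 1 := by
    apply ContinuousOn.intervalIntegrable
    rw [Set.uIcc_of_le h1]
    exact (continuousOn_id.mul (slicev u hu p hp)).mul (slicev w hw p hp)
  -- inner v-integral of D vanishes
  have inner : ∀ x ∈ Set.Icc p q, (∫ v in (-1:ℝ)..1, D x v) = 0 := by
    intro x hx
    set A := ∫ v' in (-1:ℝ)..1, u x v' with hA
    set B := ∫ v' in (-1:ℝ)..1, w x v' with hB
    set k := σ x / ε * (1 / 2) with hk
    have congr1 : (∫ v in (-1:ℝ)..1, D x v)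
        = ∫ v in (-1:ℝ)..1, (k * A * w x v - k * B * u x v) := by
      apply intervalIntegral.integral_congr
      intro v hv
      rw [Set.uIcc_of_le h1] at hv
      have e1 := hpu x hx v hv
      have e2 := hpw x hx v hv
      have : D x v = (v * ud x v) * w x v + u x v * (v * wd x v) := by
        simp only [hD]; ring
      rw [this, e1, e2, ← hA, ← hB, hk]; ring
    have intw : IntervalIntegrable (fun v => k * A * w x v) volume (-1) 1 := by
      apply ContinuousOn.intervalIntegrable
      rw [Set.uIcc_of_le h1]
      exact continuousOn_const.mul (slicev w hw x hx)
    have intu : IntervalIntegrable (fun v => k * B * u x v) volume (-1) 1 := by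
      apply ContinuousOn.intervalIntegrable
      rw [Set.uIcc_of_le h1]
      exact continuousOn_const.mul (slicev u hu x hx)
    rw [congr1, intervalIntegral.integral_sub intw intu,
      intervalIntegral.integral_const_mul, intervalIntegral.integral_const_mul,
      ← hA, ← hB]
    ring
  -- Fubini
  have hfub : (∫ v in Set.Ioc (-1:ℝ) 1, ∫ x in Set.Ioc p q, D x v)
      = ∫ x in Set.Ioc p q, ∫ v in Set.Ioc (-1:ℝ) 1, D x v := by
    have hint2 : MeasureTheory.Integrable (Function.uncurry (fun v x => D x v))
        ((volume.restrict (Set.Ioc (-1:ℝ) 1)).prod (volume.restrict (Set.Ioc p q))) := by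
      have h3 : IntegrableOn (Function.uncurry fun v x => D x v)
          (Set.Ioc (-1:ℝ) 1 ×ˢ Set.Ioc p q) (volume.prod volume) :=
        (hDcont.integrableOn_compact (isCompact_Icc.prod isCompact_Icc)).mono_set
          (Set.prod_mono Set.Ioc_subset_Icc_self Set.Ioc_subset_Icc_self)
      rw [Measure.prod_restrict]
      exact h3
    exact MeasureTheory.integral_integral_swap hint2
  have key : (∫ v in (-1:ℝ)..1, (v * u q v * w q v - v * u p v * w p v)) = 0 := by
    have c1 : (∫ v in (-1:ℝ)..1, (v * u q v * w q v - v * u p v * w p v))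
        = ∫ v in (-1:ℝ)..1, ∫ x in p..q, D x v := by
      apply intervalIntegral.integral_congr
      intro v hv
      rw [Set.uIcc_of_le h1] at hv
      exact (ftc v hv).symm
    rw [c1, intervalIntegral.integral_of_le h1]
    have c2 : ∀ v : ℝ, (∫ x in p..q, D x v) = ∫ x in Set.Ioc p q, D x v := by
      intro v; rw [intervalIntegral.integral_of_le hpq]
    simp_rw [c2]
    rw [hfub]
    have c3 : ∀ x ∈ Set.Ioc p q, (∫ v in Set.Ioc (-1:ℝ) 1, D x v) = 0 := by
      intro x hx
      rw [← intervalIntegral.integral_of_le h1]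
      exact inner x (Set.Ioc_subset_Icc_self hx)
    rw [MeasureTheory.setIntegral_congr_fun measurableSet_Ioc c3]
    simp
  have := intervalIntegral.integral_sub intq intp
  rw [key] at this
  linarith [this]


/-- Adjointness of the boundary-to-boundary map, 1D form (Theorem 3.2 of the paper).
With subdomain `(a,b)` containing the buffer-free region `(c,d)`, `u` solving the forward
RTE on `[a,b] × [−1,1]`, `g` solving the adjoint RTE on the buffer-free region
`[c,d] × [−1,1]` with inflow data `ψ + h` on `Γ^s_{m,+}`, and `h` solving the adjoint RTE
on the buffer regions `[a,c] × [−1,1]` and `[d,b] × [−1,1]` with matching data `g` on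
`Γ^s_{m,−}` and vanishing data on `Γ_{m,+}`, the weighted boundary pairings agree:
`⟨P_m φ, ψ⟩_{Γ^s_{m,+}} = ⟨φ, P*_m ψ⟩_{Γ_{m,−}}`. -/
theorem rte_boundary_to_boundary_adjoint (a c d b ε : ℝ)
    (hac : a < c) (hcd : c < d) (hdb : d < b) (hε : 0 < ε)
    (σ : ℝ → ℝ) (hσ : ContinuousOn σ (Set.Icc a b))
    (u g h ud gd hd : ℝ → ℝ → ℝ) (ψ : ℝ → ℝ)
    -- regularity of u on [a,b] × [−1,1]
    (hu_cont : ContinuousOn (fun q : ℝ × ℝ => u q.1 q.2)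
      (Set.Icc a b ×ˢ Set.Icc (-1 : ℝ) 1))
    (hud : ∀ x ∈ Set.Icc a b, ∀ v ∈ Set.Icc (-1 : ℝ) 1,
      HasDerivWithinAt (fun x' => u x' v) (ud x v) (Set.Icc a b) x)
    (hud_cont : ContinuousOn (fun q : ℝ × ℝ => ud q.1 q.2)
      (Set.Icc a b ×ˢ Set.Icc (-1 : ℝ) 1))
    -- regularity of g on [c,d] × [−1,1]
    (hg_cont : ContinuousOn (fun q : ℝ × ℝ => g q.1 q.2)
      (Set.Icc c d ×ˢ Set.Icc (-1 : ℝ) 1))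
    (hgd : ∀ x ∈ Set.Icc c d, ∀ v ∈ Set.Icc (-1 : ℝ) 1,
      HasDerivWithinAt (fun x' => g x' v) (gd x v) (Set.Icc c d) x)
    (hgd_cont : ContinuousOn (fun q : ℝ × ℝ => gd q.1 q.2)
      (Set.Icc c d ×ˢ Set.Icc (-1 : ℝ) 1))
    -- regularity of h on ([a,c] ∪ [d,b]) × [−1,1]
    (hh_cont : ContinuousOn (fun q : ℝ × ℝ => h q.1 q.2)
      ((Set.Icc a c ∪ Set.Icc d b) ×ˢ Set.Icc (-1 : ℝ) 1))
    (hhd_left : ∀ x ∈ Set.Icc a c, ∀ v ∈ Set.Icc (-1 : ℝ) 1,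
      HasDerivWithinAt (fun x' => h x' v) (hd x v) (Set.Icc a c) x)
    (hhd_right : ∀ x ∈ Set.Icc d b, ∀ v ∈ Set.Icc (-1 : ℝ) 1,
      HasDerivWithinAt (fun x' => h x' v) (hd x v) (Set.Icc d b) x)
    (hhd_cont : ContinuousOn (fun q : ℝ × ℝ => hd q.1 q.2)
      ((Set.Icc a c ∪ Set.Icc d b) ×ˢ Set.Icc (-1 : ℝ) 1))
    -- (i) forward RTE for u on [a,b] × [−1,1]
    (hpde_u : ∀ x ∈ Set.Icc a b, ∀ v ∈ Set.Icc (-1 : ℝ) 1,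
      v * ud x v = (σ x / ε) * (((1 / 2) * ∫ v' in (-1 : ℝ)..1, u x v') - u x v))
    -- (ii) adjoint RTE for g on [c,d] × [−1,1] with inflow data ψ + h on Γ^s_{m,+}
    (hpde_g : ∀ x ∈ Set.Icc c d, ∀ v ∈ Set.Icc (-1 : ℝ) 1,
      -v * gd x v = (σ x / ε) * (((1 / 2) * ∫ v' in (-1 : ℝ)..1, g x v') - g x v))
    (hg_d : ∀ v ∈ Set.Ioo (0 : ℝ) 1, g d v = ψ v + h d v)
    (hg_c : ∀ v ∈ Set.Ioo (-1 : ℝ) 0, g c v = ψ v + h c v)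
    -- (iii) adjoint RTE for h on the buffer regions, with coupling and outflow conditions
    (hpde_h_left : ∀ x ∈ Set.Icc a c, ∀ v ∈ Set.Icc (-1 : ℝ) 1,
      -v * hd x v = (σ x / ε) * (((1 / 2) * ∫ v' in (-1 : ℝ)..1, h x v') - h x v))
    (hpde_h_right : ∀ x ∈ Set.Icc d b, ∀ v ∈ Set.Icc (-1 : ℝ) 1,
      -v * hd x v = (σ x / ε) * (((1 / 2) * ∫ v' in (-1 : ℝ)..1, h x v') - h x v))
    (hh_c : ∀ v ∈ Set.Ioo (0 : ℝ) 1, h c v = g c v)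
    (hh_d : ∀ v ∈ Set.Ioo (-1 : ℝ) 0, h d v = g d v)
    (hh_a : ∀ v ∈ Set.Ioo (-1 : ℝ) 0, h a v = 0)
    (hh_b : ∀ v ∈ Set.Ioo (0 : ℝ) 1, h b v = 0) :
    (∫ v in (0 : ℝ)..1, v * u d v * ψ v) + (∫ v in (-1 : ℝ)..0, |v| * u c v * ψ v)
      = (∫ v in (0 : ℝ)..1, v * u a v * h a v)
        + ∫ v in (-1 : ℝ)..0, |v| * u b v * h b v := by
  have hab : a ≤ b := hac.le.trans (hcd.le.trans hdb.le)
  have hcd_ab : Set.Icc c d ⊆ Set.Icc a b := Set.Icc_subset_Icc hac.le hdb.le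
  have hac_ab : Set.Icc a c ⊆ Set.Icc a b := Set.Icc_subset_Icc le_rfl (hcd.le.trans hdb.le)
  have hdb_ab : Set.Icc d b ⊆ Set.Icc a b := Set.Icc_subset_Icc (hac.le.trans hcd.le) le_rfl
  have hacU : Set.Icc a c ⊆ Set.Icc a c ∪ Set.Icc d b := Set.subset_union_left
  have hdbU : Set.Icc d b ⊆ Set.Icc a c ∪ Set.Icc d b := Set.subset_union_right
  -- the three flux-conservation identities
  have E1 : (∫ v in (-1:ℝ)..1, v * u d v * g d v) = ∫ v in (-1:ℝ)..1, v * u c v * g c v :=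
    flux_const c d ε hcd.le hε σ u g ud gd
      (hu_cont.mono (Set.prod_mono hcd_ab subset_rfl))
      hg_cont
      (hud_cont.mono (Set.prod_mono hcd_ab subset_rfl))
      hgd_cont
      (fun x hx v hv => (hud x (hcd_ab hx) v hv).mono hcd_ab)
      hgd
      (fun x hx v hv => hpde_u x (hcd_ab hx) v hv)
      (fun x hx v hv => by have := hpde_g x hx v hv; linarith)
  have E2 : (∫ v in (-1:ℝ)..1, v * u c v * h c v) = ∫ v in (-1:ℝ)..1, v * u a v * h a v :=
    flux_const a c ε hac.le hε σ u h ud hd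
      (hu_cont.mono (Set.prod_mono hac_ab subset_rfl))
      (hh_cont.mono (Set.prod_mono hacU subset_rfl))
      (hud_cont.mono (Set.prod_mono hac_ab subset_rfl))
      (hhd_cont.mono (Set.prod_mono hacU subset_rfl))
      (fun x hx v hv => (hud x (hac_ab hx) v hv).mono hac_ab)
      hhd_left
      (fun x hx v hv => hpde_u x (hac_ab hx) v hv)
      (fun x hx v hv => by have := hpde_h_left x hx v hv; linarith)
  have E3 : (∫ v in (-1:ℝ)..1, v * u b v * h b v) = ∫ v in (-1:ℝ)..1, v * u d v * h d v :=
    flux_const d b ε hdb.le hε σ u h ud hd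
      (hu_cont.mono (Set.prod_mono hdb_ab subset_rfl))
      (hh_cont.mono (Set.prod_mono hdbU subset_rfl))
      (hud_cont.mono (Set.prod_mono hdb_ab subset_rfl))
      (hhd_cont.mono (Set.prod_mono hdbU subset_rfl))
      (fun x hx v hv => (hud x (hdb_ab hx) v hv).mono hdb_ab)
      hhd_right
      (fun x hx v hv => hpde_u x (hdb_ab hx) v hv)
      (fun x hx v hv => by have := hpde_h_right x hx v hv; linarith)
  -- slice continuity in v
  have sl : ∀ (f : ℝ → ℝ → ℝ) (S : Set ℝ),
      ContinuousOn (fun z : ℝ × ℝ => f z.1 z.2) (S ×ˢ Set.Icc (-1:ℝ) 1) →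
      ∀ X ∈ S, ContinuousOn (fun v => f X v) (Set.Icc (-1:ℝ) 1) :=
    fun f S hf X hX => hf.comp
      (Continuous.continuousOn (continuous_const.prodMk continuous_id))
      (fun v hv => Set.mk_mem_prod hX hv)
  have uA := sl u (Set.Icc a b) hu_cont a ⟨le_rfl, hab⟩
  have uB := sl u (Set.Icc a b) hu_cont b ⟨hab, le_rfl⟩
  have uC := sl u (Set.Icc a b) hu_cont c ⟨hac.le, hcd.le.trans hdb.le⟩
  have uD := sl u (Set.Icc a b) hu_cont d ⟨hac.le.trans hcd.le, hdb.le⟩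
  have gC := sl g (Set.Icc c d) hg_cont c ⟨le_rfl, hcd.le⟩
  have gD := sl g (Set.Icc c d) hg_cont d ⟨hcd.le, le_rfl⟩
  have hA := sl h _ hh_cont a (hacU ⟨le_rfl, hac.le⟩)
  have hB := sl h _ hh_cont b (hdbU ⟨hdb.le, le_rfl⟩)
  have hC := sl h _ hh_cont c (hacU ⟨hac.le, le_rfl⟩)
  have hD := sl h _ hh_cont d (hdbU ⟨le_rfl, hdb.le⟩)
  -- interval integrability helper
  have s1 : Set.uIcc (-1:ℝ) 0 ⊆ Set.Icc (-1:ℝ) 1 := by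
    rw [Set.uIcc_of_le (by norm_num : (-1:ℝ) ≤ 0)]
    exact Set.Icc_subset_Icc le_rfl (by norm_num)
  have s2 : Set.uIcc (0:ℝ) 1 ⊆ Set.Icc (-1:ℝ) 1 := by
    rw [Set.uIcc_of_le (by norm_num : (0:ℝ) ≤ 1)]
    exact Set.Icc_subset_Icc (by norm_num) le_rfl
  have II : ∀ (F G : ℝ → ℝ), ContinuousOn F (Set.Icc (-1:ℝ) 1) →
      ContinuousOn G (Set.Icc (-1:ℝ) 1) → ∀ {s t : ℝ}, Set.uIcc s t ⊆ Set.Icc (-1:ℝ) 1 →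
      IntervalIntegrable (fun v => v * F v * G v) volume s t := by
    intro F G hF hG s t hst
    apply ContinuousOn.intervalIntegrable
    exact (continuousOn_id.mul (hF.mono hst)).mul (hG.mono hst)
  have spl : ∀ (F : ℝ → ℝ), IntervalIntegrable F volume (-1) 0 →
      IntervalIntegrable F volume 0 1 →
      (∫ v in (-1:ℝ)..1, F v) = (∫ v in (-1:ℝ)..0, F v) + ∫ v in (0:ℝ)..1, F v :=
    fun F i1 i2 => (intervalIntegral.integral_add_adjacent_intervals i1 i2).symm
  -- split the flux identities at v = 0
  have E1' := E1
  rw [spl (fun v => v * u d v * g d v) (II _ _ uD gD s1) (II _ _ uD gD s2),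
    spl (fun v => v * u c v * g c v) (II _ _ uC gC s1) (II _ _ uC gC s2)] at E1'
  have E2' := E2
  rw [spl (fun v => v * u c v * h c v) (II _ _ uC hC s1) (II _ _ uC hC s2),
    spl (fun v => v * u a v * h a v) (II _ _ uA hA s1) (II _ _ uA hA s2)] at E2'
  have E3' := E3
  rw [spl (fun v => v * u b v * h b v) (II _ _ uB hB s1) (II _ _ uB hB s2),
    spl (fun v => v * u d v * h d v) (II _ _ uD hD s1) (II _ _ uD hD s2)] at E3'
  -- boundary-condition rewrites
  have hm10 : (-1:ℝ) ≤ 0 := by norm_num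
  have h01 : (0:ℝ) ≤ 1 := by norm_num
  have c1 : (∫ v in (-1:ℝ)..0, v * u d v * g d v) = ∫ v in (-1:ℝ)..0, v * u d v * h d v :=
    integral_congr_Ioo hm10 (fun v hv => by rw [hh_d v hv])
  have c2 : (∫ v in (0:ℝ)..1, v * u c v * g c v) = ∫ v in (0:ℝ)..1, v * u c v * h c v :=
    integral_congr_Ioo h01 (fun v hv => by rw [hh_c v hv])
  have c3 : (∫ v in (-1:ℝ)..0, v * u a v * h a v) = 0 := by
    rw [integral_congr_Ioo hm10 (g := fun _ => 0) (fun v hv => by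
        show v * u a v * h a v = 0
        rw [hh_a v hv]; ring)]
    simp
  have c4 : (∫ v in (0:ℝ)..1, v * u b v * h b v) = 0 := by
    rw [integral_congr_Ioo h01 (g := fun _ => 0) (fun v hv => by
        show v * u b v * h b v = 0
        rw [hh_b v hv]; ring)]
    simp
  have c5 : (∫ v in (0:ℝ)..1, v * u d v * ψ v)
      = (∫ v in (0:ℝ)..1, v * u d v * g d v) - ∫ v in (0:ℝ)..1, v * u d v * h d v := by
    rw [integral_congr_Ioo h01
      (g := fun v => v * u d v * g d v - v * u d v * h d v)
      (fun v hv => by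
        show v * u d v * ψ v = v * u d v * g d v - v * u d v * h d v
        rw [hg_d v hv]; ring)]
    exact intervalIntegral.integral_sub (II _ _ uD gD s2) (II _ _ uD hD s2)
  have c6 : (∫ v in (-1:ℝ)..0, |v| * u c v * ψ v)
      = (∫ v in (-1:ℝ)..0, v * u c v * h c v) - ∫ v in (-1:ℝ)..0, v * u c v * g c v := by
    rw [integral_congr_Ioo hm10
      (g := fun v => v * u c v * h c v - v * u c v * g c v)
      (fun v hv => by
        show |v| * u c v * ψ v = v * u c v * h c v - v * u c v * g c v
        rw [hg_c v hv, abs_of_neg hv.2]; ring)]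
    exact intervalIntegral.integral_sub (II _ _ uC hC s1) (II _ _ uC gC s1)
  have c7 : (∫ v in (-1:ℝ)..0, |v| * u b v * h b v)
      = -∫ v in (-1:ℝ)..0, v * u b v * h b v := by
    rw [integral_congr_Ioo hm10
      (g := fun v => -(v * u b v * h b v))
      (fun v hv => by
        show |v| * u b v * h b v = -(v * u b v * h b v)
        rw [abs_of_neg hv.2]; ring)]
    exact intervalIntegral.integral_neg
  rw [c5, c6, c7]
  linarith [E1', E2', E3', c1, c2, c3, c4]
end

section
/- (1D trace inequality.) Let u : [0,1] × [−1,1] → ℝ be continuous and continuously differentiable in x with jointly continuous x-derivative. Then the weighted boundary trace at x = 0 is controlled by the H¹₂-type norm: ∫_{−1}^{1} |v| u(0,v)² dv ≤ ∫_0^1 ∫_{−1}^{1} [ (1 + |v|) u(x,v)² + (v ∂ₓu(x,v))² ] dv dx, and the same bound holds for the trace at x = 1. -/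
open MeasureTheory Set intervalIntegral

section RteTraceAux

variable {u ud : ℝ → ℝ → ℝ}

private lemma rte_ptwise
    (hu_cont : ContinuousOn (fun q : ℝ × ℝ => u q.1 q.2)
      (Set.Icc (0 : ℝ) 1 ×ˢ Set.Icc (-1 : ℝ) 1))
    (hud : ∀ x ∈ Set.Icc (0 : ℝ) 1, ∀ v ∈ Set.Icc (-1 : ℝ) 1,
      HasDerivWithinAt (fun x' => u x' v) (ud x v) (Set.Icc (0 : ℝ) 1) x)
    (hud_cont : ContinuousOn (fun q : ℝ × ℝ => ud q.1 q.2)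
      (Set.Icc (0 : ℝ) 1 ×ˢ Set.Icc (-1 : ℝ) 1))
    {a v : ℝ} (ha : a ∈ Icc (0:ℝ) 1) (hv : v ∈ Icc (-1:ℝ) 1) :
    |v| * u a v ^ 2 ≤ ∫ x in (0:ℝ)..1, (1 + |v|) * u x v ^ 2 + (v * ud x v) ^ 2 := by
  have huIcc : (Set.uIcc (0:ℝ) 1) = Icc 0 1 := uIcc_of_le (by norm_num)
  have hmap : ∀ x ∈ Icc (0:ℝ) 1, ((x, v) : ℝ × ℝ) ∈ Icc (0:ℝ) 1 ×ˢ Icc (-1:ℝ) 1 :=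
    fun x hx => ⟨hx, hv⟩
  have hline : ContinuousOn (fun x : ℝ => ((x, v) : ℝ × ℝ)) (Icc 0 1) :=
    (continuous_id.prodMk continuous_const).continuousOn
  have hf : ContinuousOn (fun x => u x v) (Icc (0:ℝ) 1) := hu_cont.comp hline hmap
  have hf' : ContinuousOn (fun x => ud x v) (Icc (0:ℝ) 1) := hud_cont.comp hline hmap
  have hprod_cont : ContinuousOn (fun s => 2 * u s v * ud s v) (Icc (0:ℝ) 1) :=
    ((continuousOn_const.mul hf).mul hf')
  have hint01 : IntervalIntegrable (fun s => 2 * u s v * ud s v) volume 0 1 := by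
    apply ContinuousOn.intervalIntegrable; rwa [huIcc]
  have hintabs : IntervalIntegrable (fun s => |2 * u s v * ud s v|) volume 0 1 := hint01.abs
  -- FTC on subintervals of [0,1]
  have hkey : ∀ x ∈ Icc (0:ℝ) 1, ∀ y ∈ Icc (0:ℝ) 1, x ≤ y →
      ∫ s in x..y, 2 * u s v * ud s v = u y v ^ 2 - u x v ^ 2 := by
    intro x hx y hy hxy
    apply intervalIntegral.integral_eq_sub_of_hasDeriv_right_of_le hxy
    · exact (hf.mono (Icc_subset_Icc hx.1 hy.2)).pow 2
    · intro s hs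
      have hs' : s ∈ Ioo (0:ℝ) 1 := ⟨lt_of_le_of_lt hx.1 hs.1, lt_of_lt_of_le hs.2 hy.2⟩
      have hd : HasDerivAt (fun x' => u x' v) (ud s v) s :=
        (hud s (Ioo_subset_Icc_self hs') v hv).hasDerivAt (Icc_mem_nhds hs'.1 hs'.2)
      have h2 := (hd.pow 2).hasDerivWithinAt (s := Ioi s)
      convert h2 using 1
      · rfl
      · norm_num
    · exact hint01.mono_set (by rw [huIcc, uIcc_of_le hxy]; exact Icc_subset_Icc hx.1 hy.2)
  -- trace value controlled by value at x plus total derivative mass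
  have habs : ∀ x ∈ Icc (0:ℝ) 1,
      u a v ^ 2 ≤ u x v ^ 2 + ∫ s in (0:ℝ)..1, |2 * u s v * ud s v| := by
    intro x hx
    rcases le_total a x with h | h
    · have hk := hkey a ha x hx h
      have h1 : |∫ s in a..x, 2 * u s v * ud s v| ≤ ∫ s in a..x, |2 * u s v * ud s v| :=
        intervalIntegral.abs_integral_le_integral_abs h
      have h2 : (∫ s in a..x, |2 * u s v * ud s v|) ≤ ∫ s in (0:ℝ)..1, |2 * u s v * ud s v| :=
        intervalIntegral.integral_mono_interval ha.1 h hx.2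
          (Filter.Eventually.of_forall fun s => abs_nonneg _) hintabs
      have h3 := neg_abs_le (∫ s in a..x, 2 * u s v * ud s v)
      linarith
    · have hk := hkey x hx a ha h
      have h1 : |∫ s in x..a, 2 * u s v * ud s v| ≤ ∫ s in x..a, |2 * u s v * ud s v| :=
        intervalIntegral.abs_integral_le_integral_abs h
      have h2 : (∫ s in x..a, |2 * u s v * ud s v|) ≤ ∫ s in (0:ℝ)..1, |2 * u s v * ud s v| :=
        intervalIntegral.integral_mono_interval hx.1 h ha.2
          (Filter.Eventually.of_forall fun s => abs_nonneg _) hintabs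
      have h3 := le_abs_self (∫ s in x..a, 2 * u s v * ud s v)
      linarith
  set C : ℝ := ∫ s in (0:ℝ)..1, u s v ^ 2 + (v * ud s v) ^ 2 with hCdef
  have hCint : IntervalIntegrable (fun s => u s v ^ 2 + (v * ud s v) ^ 2) volume 0 1 := by
    apply ContinuousOn.intervalIntegrable
    rw [huIcc]
    exact (hf.pow 2).add ((continuousOn_const.mul hf').pow 2)
  have hC : |v| * (∫ s in (0:ℝ)..1, |2 * u s v * ud s v|) ≤ C := by
    rw [← intervalIntegral.integral_const_mul]
    apply intervalIntegral.integral_mono_on (by norm_num) (hintabs.const_mul _) hCint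
    intro s _
    have heq : |v| * |2 * u s v * ud s v| = 2 * |u s v| * |v * ud s v| := by
      rw [abs_mul, abs_mul, abs_mul, abs_two]; ring
    rw [heq]
    calc 2 * |u s v| * |v * ud s v| ≤ |u s v| ^ 2 + |v * ud s v| ^ 2 := two_mul_le_add_sq _ _
      _ = u s v ^ 2 + (v * ud s v) ^ 2 := by rw [sq_abs, sq_abs]
  have hmain : ∀ x ∈ Icc (0:ℝ) 1, |v| * u a v ^ 2 ≤ |v| * u x v ^ 2 + C := by
    intro x hx
    have h := habs x hx
    nlinarith [abs_nonneg v, hC, mul_le_mul_of_nonneg_left h (abs_nonneg v)]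
  have hsq : IntervalIntegrable (fun x => |v| * u x v ^ 2) volume 0 1 := by
    apply ContinuousOn.intervalIntegrable
    rw [huIcc]
    exact continuousOn_const.mul (hf.pow 2)
  calc |v| * u a v ^ 2 = ∫ _ in (0:ℝ)..1, |v| * u a v ^ 2 := by simp
    _ ≤ ∫ x in (0:ℝ)..1, (|v| * u x v ^ 2 + C) := by
        apply intervalIntegral.integral_mono_on (by norm_num) (by simp) (hsq.add (by simp))
        exact hmain
    _ = (∫ x in (0:ℝ)..1, |v| * u x v ^ 2) + C := by
        rw [intervalIntegral.integral_add hsq (by simp)]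
        simp
    _ = ∫ x in (0:ℝ)..1, (1 + |v|) * u x v ^ 2 + (v * ud x v) ^ 2 := by
        rw [hCdef, ← intervalIntegral.integral_add hsq hCint]
        apply intervalIntegral.integral_congr
        intro x _
        ring

private lemma rte_trace_side
    (hu_cont : ContinuousOn (fun q : ℝ × ℝ => u q.1 q.2)
      (Set.Icc (0 : ℝ) 1 ×ˢ Set.Icc (-1 : ℝ) 1))
    (hud : ∀ x ∈ Set.Icc (0 : ℝ) 1, ∀ v ∈ Set.Icc (-1 : ℝ) 1,
      HasDerivWithinAt (fun x' => u x' v) (ud x v) (Set.Icc (0 : ℝ) 1) x)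
    (hud_cont : ContinuousOn (fun q : ℝ × ℝ => ud q.1 q.2)
      (Set.Icc (0 : ℝ) 1 ×ˢ Set.Icc (-1 : ℝ) 1))
    {a : ℝ} (ha : a ∈ Icc (0:ℝ) 1) :
    (∫ v in (-1 : ℝ)..1, |v| * u a v ^ 2)
      ≤ ∫ x in (0 : ℝ)..1, ∫ v in (-1 : ℝ)..1,
          (1 + |v|) * u x v ^ 2 + (v * ud x v) ^ 2 := by
  set G : ℝ → ℝ → ℝ := fun x v => (1 + |v|) * u x v ^ 2 + (v * ud x v) ^ 2 with hGdef
  have hGcont : ContinuousOn (fun q : ℝ × ℝ => G q.1 q.2)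
      (Icc (0:ℝ) 1 ×ˢ Icc (-1:ℝ) 1) := by
    apply ContinuousOn.add
    · exact (continuous_const.add (continuous_abs.comp continuous_snd)).continuousOn.mul
        (hu_cont.pow 2)
    · exact (continuous_snd.continuousOn.mul hud_cont).pow 2
  have hGint0 : IntegrableOn (fun q : ℝ × ℝ => G q.1 q.2)
      (Icc (0:ℝ) 1 ×ˢ Icc (-1:ℝ) 1) volume :=
    hGcont.integrableOn_compact (isCompact_Icc.prod isCompact_Icc)
  have key : Integrable (fun q : ℝ × ℝ => G q.1 q.2)
      ((volume.restrict (Ioc (0:ℝ) 1)).prod (volume.restrict (Ioc (-1:ℝ) 1))) := by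
    rw [Measure.prod_restrict]
    rw [Measure.volume_eq_prod] at hGint0
    exact hGint0.mono_set (prod_mono Ioc_subset_Icc_self Ioc_subset_Icc_self)
  have h01 : ((0:ℝ) ≤ 1) := by norm_num
  have h11 : ((-1:ℝ) ≤ 1) := by norm_num
  -- rewrite interval integrals as set integrals over Ioc
  rw [intervalIntegral.integral_of_le h11, intervalIntegral.integral_of_le h01]
  simp only [intervalIntegral.integral_of_le h11]
  -- Fubini
  rw [MeasureTheory.integral_integral_swap (f := fun x v => G x v) key]
  -- monotone comparison in v
  have hleft_cont : ContinuousOn (fun v => |v| * u a v ^ 2) (Icc (-1:ℝ) 1) := by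
    have hline : ContinuousOn (fun v : ℝ => ((a, v) : ℝ × ℝ)) (Icc (-1:ℝ) 1) :=
      (continuous_const.prodMk continuous_id).continuousOn
    exact continuous_abs.continuousOn.mul
      ((hu_cont.comp hline (fun v hv => ⟨ha, hv⟩)).pow 2)
  apply setIntegral_mono_on
  · exact (hleft_cont.integrableOn_compact isCompact_Icc).mono_set Ioc_subset_Icc_self
  · exact key.integral_prod_right
  · exact measurableSet_Ioc
  · intro v hv
    have hptw := rte_ptwise hu_cont hud hud_cont ha (Ioc_subset_Icc_self hv)
    rwa [intervalIntegral.integral_of_le h01] at hptw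

end RteTraceAux

/-- 1D trace inequality (1D form of Theorem 2.8 of Agoshkov): for `u` continuous on
`[0,1] × [−1,1]` and continuously differentiable in `x` with jointly continuous
`x`-derivative `ud`, the weighted boundary traces at `x = 0` and `x = 1` are controlled by
the `H¹₂`-type norm:
`∫_{−1}^{1} |v| u(0,v)² dv ≤ ∫₀¹∫_{−1}^{1} (1+|v|) u(x,v)² + (v ∂ₓu(x,v))² dv dx`. -/
theorem rte_trace_inequality_1d (u ud : ℝ → ℝ → ℝ)
    (hu_cont : ContinuousOn (fun q : ℝ × ℝ => u q.1 q.2)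
      (Set.Icc (0 : ℝ) 1 ×ˢ Set.Icc (-1 : ℝ) 1))
    (hud : ∀ x ∈ Set.Icc (0 : ℝ) 1, ∀ v ∈ Set.Icc (-1 : ℝ) 1,
      HasDerivWithinAt (fun x' => u x' v) (ud x v) (Set.Icc (0 : ℝ) 1) x)
    (hud_cont : ContinuousOn (fun q : ℝ × ℝ => ud q.1 q.2)
      (Set.Icc (0 : ℝ) 1 ×ˢ Set.Icc (-1 : ℝ) 1)) :
    ((∫ v in (-1 : ℝ)..1, |v| * u 0 v ^ 2)
      ≤ ∫ x in (0 : ℝ)..1, ∫ v in (-1 : ℝ)..1,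
          (1 + |v|) * u x v ^ 2 + (v * ud x v) ^ 2) ∧
    ((∫ v in (-1 : ℝ)..1, |v| * u 1 v ^ 2)
      ≤ ∫ x in (0 : ℝ)..1, ∫ v in (-1 : ℝ)..1,
          (1 + |v|) * u x v ^ 2 + (v * ud x v) ^ 2) := by
  constructor
  · exact rte_trace_side hu_cont hud hud_cont (Set.left_mem_Icc.mpr (by norm_num))
  · exact rte_trace_side hu_cont hud hud_cont (Set.right_mem_Icc.mpr (by norm_num))
end

section
/- (Outflow–inflow contraction for the 1D RTE.) Let a < b, ε > 0, σ : [a,b] → ℝ continuous with σ(x) ≥ 0, and let u : [a,b] × [−1,1] → ℝ be continuous, continuously differentiable in x with jointly continuous x-derivative, satisfying v ∂ₓu(x,v) = (σ(x)/ε)(Lu)(x,v) for all (x,v), where (Lw)(x,v) = (1/2)∫_{−1}^{1} w(x,v′) dv′ − w(x,v). Then the outflow boundary energy is bounded by the inflow boundary energy: ∫_0^1 v u(b,v)² dv + ∫_{−1}^0 |v| u(a,v)² dv ≤ ∫_0^1 v u(a,v)² dv + ∫_{−1}^0 |v| u(b,v)² dv. -/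
open MeasureTheory Set intervalIntegral

/-- Outflow–inflow contraction for the 1D RTE: if `u` solves `v ∂ₓu = (σ(x)/ε) L u`
on `[a,b] × [−1,1]` with `σ ≥ 0`, then the outflow boundary energy is bounded by the
inflow boundary energy:
`∫₀¹ v u(b,v)² dv + ∫_{−1}^0 |v| u(a,v)² dv ≤ ∫₀¹ v u(a,v)² dv + ∫_{−1}^0 |v| u(b,v)² dv`. -/
theorem rte_outflow_inflow_contraction (a b ε : ℝ) (hab : a < b) (hε : 0 < ε)
    (σ : ℝ → ℝ) (hσ_cont : ContinuousOn σ (Set.Icc a b))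
    (hσ_nonneg : ∀ x ∈ Set.Icc a b, 0 ≤ σ x)
    (u ud : ℝ → ℝ → ℝ)
    (hu_cont : ContinuousOn (fun q : ℝ × ℝ => u q.1 q.2)
      (Set.Icc a b ×ˢ Set.Icc (-1 : ℝ) 1))
    (hud : ∀ x ∈ Set.Icc a b, ∀ v ∈ Set.Icc (-1 : ℝ) 1,
      HasDerivWithinAt (fun x' => u x' v) (ud x v) (Set.Icc a b) x)
    (hud_cont : ContinuousOn (fun q : ℝ × ℝ => ud q.1 q.2)
      (Set.Icc a b ×ˢ Set.Icc (-1 : ℝ) 1))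
    (hpde : ∀ x ∈ Set.Icc a b, ∀ v ∈ Set.Icc (-1 : ℝ) 1,
      v * ud x v = (σ x / ε) * (((1 / 2) * ∫ v' in (-1 : ℝ)..1, u x v') - u x v)) :
    (∫ v in (0 : ℝ)..1, v * u b v ^ 2) + (∫ v in (-1 : ℝ)..0, |v| * u a v ^ 2)
      ≤ (∫ v in (0 : ℝ)..1, v * u a v ^ 2) + ∫ v in (-1 : ℝ)..0, |v| * u b v ^ 2 := by
  have habl : a ≤ b := hab.le
  have hV : ((-1 : ℝ)) ≤ 1 := by norm_num
  have ha : a ∈ Set.Icc a b := ⟨le_rfl, habl⟩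
  have hb : b ∈ Set.Icc a b := ⟨habl, le_rfl⟩
  -- continuity of slices
  have hux : ∀ x ∈ Set.Icc a b, ContinuousOn (fun v => u x v) (Set.Icc (-1 : ℝ) 1) := by
    intro x hx
    exact hu_cont.comp (by fun_prop) (fun v hv => Set.mk_mem_prod hx hv)
  have hudx : ∀ x ∈ Set.Icc a b, ContinuousOn (fun v => ud x v) (Set.Icc (-1 : ℝ) 1) := by
    intro x hx
    exact hud_cont.comp (by fun_prop) (fun v hv => Set.mk_mem_prod hx hv)
  have huv : ∀ v ∈ Set.Icc (-1 : ℝ) 1, ContinuousOn (fun x => u x v) (Set.Icc a b) := by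
    intro v hv
    exact hu_cont.comp (by fun_prop) (fun x hx => Set.mk_mem_prod hx hv)
  have hudv : ∀ v ∈ Set.Icc (-1 : ℝ) 1, ContinuousOn (fun x => ud x v) (Set.Icc a b) := by
    intro v hv
    exact hud_cont.comp (by fun_prop) (fun x hx => Set.mk_mem_prod hx hv)
  -- the integrand g x v = 2 v u ud
  set g : ℝ → ℝ → ℝ := fun x v => 2 * v * u x v * ud x v with hg
  -- interval integrability helper on [-1,1]
  have hii : ∀ (f : ℝ → ℝ), ContinuousOn f (Set.Icc (-1 : ℝ) 1) →
      IntervalIntegrable f volume (-1 : ℝ) 1 := by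
    intro f hf
    exact hf.intervalIntegrable_of_Icc hV
  -- FTC per fixed v : ∫ x in a..b, g x v = v * u b v ^ 2 - v * u a v ^ 2
  have hFTC : ∀ v ∈ Set.Icc (-1 : ℝ) 1,
      (∫ x in a..b, g x v) = v * u b v ^ 2 - v * u a v ^ 2 := by
    intro v hv
    have hd : ∀ x ∈ Set.Icc a b,
        HasDerivWithinAt (fun x' => v * u x' v ^ 2) (g x v) (Set.Icc a b) x := by
      intro x hx
      have h1 := ((hud x hx v hv).fun_pow 2).const_mul v
      refine h1.congr_deriv ?_
      show _ = 2 * v * u x v * ud x v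
      push_cast
      ring
    have hcont : ContinuousOn (fun x => v * u x v ^ 2) (Set.Icc a b) :=
      continuousOn_const.mul ((huv v hv).pow 2)
    have hd' : ∀ x ∈ Set.Ioo a b,
        HasDerivWithinAt (fun x' => v * u x' v ^ 2) (g x v) (Set.Ioi x) x := by
      intro x hx
      have hmem : Set.Icc a b ∈ nhds x := Icc_mem_nhds hx.1 hx.2
      exact ((hd x (Set.Ioo_subset_Icc_self hx)).hasDerivAt hmem).hasDerivWithinAt
    have hgi : IntervalIntegrable (fun x => g x v) volume a b := by
      have hc : ContinuousOn (fun x => g x v) (Set.Icc a b) :=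
        (continuousOn_const.mul (huv v hv)).mul (hudv v hv)
      exact hc.intervalIntegrable_of_Icc habl
    exact integral_eq_sub_of_hasDeriv_right_of_le habl hcont hd' hgi
  -- inner v-integral nonpositivity for each x
  have hinner : ∀ x ∈ Set.Icc a b, (∫ v in (-1 : ℝ)..1, g x v) ≤ 0 := by
    intro x hx
    set c : ℝ := σ x / ε with hc
    have hc0 : 0 ≤ c := div_nonneg (hσ_nonneg x hx) hε.le
    set I : ℝ := ∫ v' in (-1 : ℝ)..1, u x v' with hI
    set S : ℝ := ∫ v in (-1 : ℝ)..1, u x v ^ 2 with hS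
    have hiu : IntervalIntegrable (fun v => u x v) volume (-1 : ℝ) 1 := hii _ (hux x hx)
    have hiu2 : IntervalIntegrable (fun v => u x v ^ 2) volume (-1 : ℝ) 1 :=
      hii _ ((hux x hx).pow 2)
    have hcongr : (∫ v in (-1 : ℝ)..1, g x v)
        = ∫ v in (-1 : ℝ)..1, ((c * I) * u x v - (2 * c) * u x v ^ 2) := by
      apply intervalIntegral.integral_congr
      intro v hv
      rw [Set.uIcc_of_le hV] at hv
      have hp := hpde x hx v hv
      simp only [hg]
      have h3 : 2 * v * u x v * ud x v = 2 * u x v * (v * ud x v) := by ring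
      rw [h3, hp, ← hI]
      ring
    have hsum : (∫ v in (-1 : ℝ)..1, ((c * I) * u x v - (2 * c) * u x v ^ 2))
        = c * I * I - 2 * c * S := by
      rw [intervalIntegral.integral_sub (hiu.const_mul _) (hiu2.const_mul _),
        intervalIntegral.integral_const_mul, intervalIntegral.integral_const_mul]
    have hCS : I * I ≤ 2 * S := by
      have h0 : (0 : ℝ) ≤ ∫ v in (-1 : ℝ)..1, (u x v - I / 2) ^ 2 := by
        apply intervalIntegral.integral_nonneg hV
        intro v _
        positivity
      have hexp : (∫ v in (-1 : ℝ)..1, (u x v - I / 2) ^ 2) = S - I * I / 2 := by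
        have h4 : ∀ v : ℝ, (u x v - I / 2) ^ 2
            = (u x v ^ 2 - I * u x v) + (I / 2) ^ 2 := by intro v; ring
        simp_rw [h4]
        rw [intervalIntegral.integral_add (hiu2.sub (hiu.const_mul I))
            intervalIntegrable_const,
          intervalIntegral.integral_sub hiu2 (hiu.const_mul I),
          intervalIntegral.integral_const_mul, intervalIntegral.integral_const, ← hI, ← hS]
        simp
        ring
      nlinarith [h0, hexp]
    rw [hcongr, hsum]
    nlinarith
  -- Fubini : swap the order of integration
  have hswap : (∫ v in (-1 : ℝ)..1, ∫ x in a..b, g x v)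
      = ∫ x in a..b, ∫ v in (-1 : ℝ)..1, g x v := by
    have hgint : Integrable (Function.uncurry (fun v x => g x v))
        ((volume.restrict (Set.Ioc (-1 : ℝ) 1)).prod (volume.restrict (Set.Ioc a b))) := by
      rw [Measure.prod_restrict]
      have hswapm : Set.MapsTo (fun q : ℝ × ℝ => (q.2, q.1))
          (Set.Icc (-1 : ℝ) 1 ×ˢ Set.Icc a b) (Set.Icc a b ×ˢ Set.Icc (-1 : ℝ) 1) := by
        intro q hq
        exact Set.mk_mem_prod hq.2 hq.1
      have h1 : ContinuousOn (fun q : ℝ × ℝ => u q.2 q.1)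
          (Set.Icc (-1 : ℝ) 1 ×ˢ Set.Icc a b) :=
        hu_cont.comp (Continuous.continuousOn (by fun_prop)) hswapm
      have h2 : ContinuousOn (fun q : ℝ × ℝ => ud q.2 q.1)
          (Set.Icc (-1 : ℝ) 1 ×ˢ Set.Icc a b) :=
        hud_cont.comp (Continuous.continuousOn (by fun_prop)) hswapm
      have hcg : ContinuousOn (Function.uncurry (fun v x => g x v))
          (Set.Icc (-1 : ℝ) 1 ×ˢ Set.Icc a b) :=
        ((continuousOn_const.mul continuousOn_fst).mul h1).mul h2
      have hint : IntegrableOn (Function.uncurry (fun v x => g x v))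
          (Set.Icc (-1 : ℝ) 1 ×ˢ Set.Icc a b) :=
        hcg.integrableOn_compact (isCompact_Icc.prod isCompact_Icc)
      exact hint.mono_set (Set.prod_mono Set.Ioc_subset_Icc_self Set.Ioc_subset_Icc_self)
    have := MeasureTheory.integral_integral_swap hgint
    simpa [intervalIntegral.integral_of_le habl, intervalIntegral.integral_of_le hV]
      using this
  -- nonpositivity of the swapped integral
  have hle : (∫ x in a..b, ∫ v in (-1 : ℝ)..1, g x v) ≤ 0 := by
    rw [intervalIntegral.integral_of_le habl]
    apply setIntegral_nonpos measurableSet_Ioc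
    intro x hx
    exact hinner x (Set.Ioc_subset_Icc_self hx)
  -- E b ≤ E a
  have hib : IntervalIntegrable (fun v => v * u b v ^ 2) volume (-1 : ℝ) 1 :=
    hii _ (continuousOn_id.mul ((hux b hb).pow 2))
  have hia : IntervalIntegrable (fun v => v * u a v ^ 2) volume (-1 : ℝ) 1 :=
    hii _ (continuousOn_id.mul ((hux a ha).pow 2))
  have hE : (∫ v in (-1 : ℝ)..1, v * u b v ^ 2) ≤ ∫ v in (-1 : ℝ)..1, v * u a v ^ 2 := by
    have hdiff : (∫ v in (-1 : ℝ)..1, v * u b v ^ 2) - (∫ v in (-1 : ℝ)..1, v * u a v ^ 2)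
        = ∫ v in (-1 : ℝ)..1, ∫ x in a..b, g x v := by
      rw [← intervalIntegral.integral_sub hib hia]
      apply intervalIntegral.integral_congr
      intro v hv
      rw [Set.uIcc_of_le hV] at hv
      exact (hFTC v hv).symm
    have := hswap ▸ hdiff
    linarith [hle, this]
  -- split the full integral and rewrite |v|
  have hsplit : ∀ x ∈ Set.Icc a b,
      (∫ v in (-1 : ℝ)..0, v * u x v ^ 2) + (∫ v in (0 : ℝ)..1, v * u x v ^ 2)
        = ∫ v in (-1 : ℝ)..1, v * u x v ^ 2 := by
    intro x hx
    have hfull : IntervalIntegrable (fun v => v * u x v ^ 2) volume (-1 : ℝ) 1 :=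
      hii _ (continuousOn_id.mul ((hux x hx).pow 2))
    exact intervalIntegral.integral_add_adjacent_intervals
      (hfull.mono_set (by
        rw [Set.uIcc_of_le hV, Set.uIcc_of_le (by norm_num : (-1:ℝ) ≤ 0)]
        exact Set.Icc_subset_Icc le_rfl (by norm_num)))
      (hfull.mono_set (by
        rw [Set.uIcc_of_le hV, Set.uIcc_of_le (by norm_num : (0:ℝ) ≤ 1)]
        exact Set.Icc_subset_Icc (by norm_num) le_rfl))
  have habs : ∀ x : ℝ, (∫ v in (-1 : ℝ)..0, |v| * u x v ^ 2)
      = - ∫ v in (-1 : ℝ)..0, v * u x v ^ 2 := by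
    intro x
    rw [← intervalIntegral.integral_neg]
    apply intervalIntegral.integral_congr
    intro v hv
    rw [Set.uIcc_of_le (by norm_num : (-1:ℝ) ≤ 0)] at hv
    show |v| * u x v ^ 2 = -(v * u x v ^ 2)
    rw [abs_of_nonpos hv.2]
    ring
  have h1 := hsplit a ha
  have h2 := hsplit b hb
  have h3 := habs a
  have h4 := habs b
  linarith
end

section
/- (Uniqueness for the 1D RTE boundary value problem.) Let a < b, ε > 0, and σ : [a,b] → ℝ continuous with σ(x) > 0 for all x. Let u : [a,b] × [−1,1] → ℝ be continuous, continuously differentiable in x with jointly continuous x-derivative, satisfying v ∂ₓu(x,v) = (σ(x)/ε)(Lu)(x,v) for all (x,v), where (Lw)(x,v) = (1/2)∫_{−1}^{1} w(x,v′) dv′ − w(x,v), together with homogeneous inflow boundary conditions u(a,v) = 0 for v ∈ (0,1] and u(b,v) = 0 for v ∈ [−1,0). Then u ≡ 0 on [a,b] × [−1,1]. -/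
open Set intervalIntegral

lemma deriv_nonneg_of_max_left {f : ℝ → ℝ} {f' a b x : ℝ} (hx : x ∈ Set.Icc a b) (hax : a < x)
    (hd : HasDerivWithinAt f f' (Set.Icc a b) x) (hmax : IsMaxOn f (Set.Icc a b) x) :
    0 ≤ f' := by
  have ha : a ∈ Set.Icc a b := ⟨le_refl a, hax.le.trans hx.2⟩
  have hy : (a - x) ∈ posTangentConeAt (Set.Icc a b) x :=
    sub_mem_posTangentConeAt_of_segment_subset ((convex_Icc a b).segment_subset hx ha)
  have := hmax.localize.hasFDerivWithinAt_nonpos hd.hasFDerivWithinAt hy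
  simp only [ContinuousLinearMap.toSpanSingleton_apply,
    smul_eq_mul] at this
  nlinarith

lemma deriv_nonpos_of_max_right {f : ℝ → ℝ} {f' a b x : ℝ} (hx : x ∈ Set.Icc a b) (hxb : x < b)
    (hd : HasDerivWithinAt f f' (Set.Icc a b) x) (hmax : IsMaxOn f (Set.Icc a b) x) :
    f' ≤ 0 := by
  have hb : b ∈ Set.Icc a b := ⟨hx.1.trans hxb.le, le_refl b⟩
  have hy : (b - x) ∈ posTangentConeAt (Set.Icc a b) x :=
    sub_mem_posTangentConeAt_of_segment_subset ((convex_Icc a b).segment_subset hx hb)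
  have := hmax.localize.hasFDerivWithinAt_nonpos hd.hasFDerivWithinAt hy
  simp only [ContinuousLinearMap.toSpanSingleton_apply,
    smul_eq_mul] at this
  nlinarith

lemma rte_nonpos (a b ε : ℝ) (hab : a < b) (hε : 0 < ε)
    (σ : ℝ → ℝ) (hσ_cont : ContinuousOn σ (Set.Icc a b))
    (hσ_pos : ∀ x ∈ Set.Icc a b, 0 < σ x)
    (u ud : ℝ → ℝ → ℝ)
    (hu_cont : ContinuousOn (fun q : ℝ × ℝ => u q.1 q.2)
      (Set.Icc a b ×ˢ Set.Icc (-1 : ℝ) 1))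
    (hud : ∀ x ∈ Set.Icc a b, ∀ v ∈ Set.Icc (-1 : ℝ) 1,
      HasDerivWithinAt (fun x' => u x' v) (ud x v) (Set.Icc a b) x)
    (hpde : ∀ x ∈ Set.Icc a b, ∀ v ∈ Set.Icc (-1 : ℝ) 1,
      v * ud x v = (σ x / ε) * (((1 / 2) * ∫ v' in (-1 : ℝ)..1, u x v') - u x v))
    (hin_a : ∀ v ∈ Set.Ioc (0 : ℝ) 1, u a v = 0)
    (hin_b : ∀ v ∈ Set.Ico (-1 : ℝ) 0, u b v = 0) :
    ∀ x ∈ Set.Icc a b, ∀ v ∈ Set.Icc (-1 : ℝ) 1, u x v ≤ 0 := by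
  -- basic slice continuity facts
  have hvIcc : ((-1 : ℝ) ≤ 1) := by norm_num
  have hone : (1 : ℝ) ∈ Set.Icc (-1 : ℝ) 1 := by norm_num
  have hslice_v : ∀ x ∈ Set.Icc a b, ContinuousOn (fun v => u x v) (Set.Icc (-1 : ℝ) 1) := by
    intro x hx
    have : ContinuousOn (fun v : ℝ => ((x, v) : ℝ × ℝ)) (Set.Icc (-1 : ℝ) 1) :=
      (continuous_const.prodMk continuous_id).continuousOn
    exact hu_cont.comp this (fun v hv => ⟨hx, hv⟩)
  have hslice_x : ∀ v ∈ Set.Icc (-1 : ℝ) 1, ContinuousOn (fun x => u x v) (Set.Icc a b) := by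
    intro v hv
    have : ContinuousOn (fun x : ℝ => ((x, v) : ℝ × ℝ)) (Set.Icc a b) :=
      (continuous_id.prodMk continuous_const).continuousOn
    exact hu_cont.comp this (fun x hx => ⟨hx, hv⟩)
  by_contra hcon
  push_neg at hcon
  obtain ⟨xp, hxp, vp, hvp, hpos⟩ := hcon
  -- maximum point
  have hK : IsCompact (Set.Icc a b ×ˢ Set.Icc (-1 : ℝ) 1) := isCompact_Icc.prod isCompact_Icc
  have hKne : (Set.Icc a b ×ˢ Set.Icc (-1 : ℝ) 1).Nonempty := ⟨(xp, vp), hxp, hvp⟩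
  obtain ⟨⟨x₀, v₀⟩, hq₀, hmax⟩ := hK.exists_isMaxOn hKne hu_cont
  obtain ⟨hx₀, hv₀⟩ : x₀ ∈ Set.Icc a b ∧ v₀ ∈ Set.Icc (-1 : ℝ) 1 := hq₀
  set M := u x₀ v₀ with hM
  have hMpos : 0 < M := lt_of_lt_of_le hpos (hmax (Set.mk_mem_prod hxp hvp))
  have hle : ∀ x ∈ Set.Icc a b, ∀ v ∈ Set.Icc (-1 : ℝ) 1, u x v ≤ M := fun x hx v hv =>
    hmax (Set.mk_mem_prod hx hv)
  -- integral bound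
  have hInt : ∀ x ∈ Set.Icc a b, IntervalIntegrable (fun v => u x v) MeasureTheory.volume (-1) 1 :=
    fun x hx => (hslice_v x hx).intervalIntegrable_of_Icc hvIcc
  have hIbound : ∀ x ∈ Set.Icc a b, (∫ v' in (-1 : ℝ)..1, u x v') ≤ 2 * M := by
    intro x hx
    have := intervalIntegral.integral_mono_on hvIcc (hInt x hx)
      (_root_.intervalIntegrable_const (c := M)) (fun v hv => hle x hx v hv)
    rw [intervalIntegral.integral_const] at this
    norm_num at this
    linarith
  have hσε : ∀ x ∈ Set.Icc a b, 0 < σ x / ε := fun x hx => div_pos (hσ_pos x hx) hε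
  -- Step A : (1/2) * integral at x₀ = M
  have hIeq : (1 / 2) * (∫ v' in (-1 : ℝ)..1, u x₀ v') = M := by
    have hge : M ≤ (1 / 2) * (∫ v' in (-1 : ℝ)..1, u x₀ v') := by
      rcases lt_trichotomy v₀ 0 with hneg | hzero | hposv
      · -- v₀ < 0 : x₀ < b
        have hx₀b : x₀ < b := by
          rcases lt_or_eq_of_le hx₀.2 with h | h; · exact h
          exfalso
          have := hin_b v₀ ⟨hv₀.1, hneg⟩
          rw [← h] at this; rw [hM, this] at hMpos; exact lt_irrefl 0 hMpos
        have hud0 : ud x₀ v₀ ≤ 0 :=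
          deriv_nonpos_of_max_right hx₀ hx₀b (hud x₀ hx₀ v₀ hv₀)
            (fun x hx => hle x hx v₀ hv₀)
        have hp := hpde x₀ hx₀ v₀ hv₀
        have h1 : 0 ≤ v₀ * ud x₀ v₀ := by nlinarith
        rw [hp] at h1
        have := hσε x₀ hx₀
        nlinarith
      · -- v₀ = 0
        have hp := hpde x₀ hx₀ v₀ hv₀
        rw [hzero] at hp
        simp only [zero_mul] at hp
        have hσx := hσε x₀ hx₀
        have h0 : ((1 / 2) * ∫ v' in (-1 : ℝ)..1, u x₀ v') - u x₀ 0 = 0 := by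
          rcases mul_eq_zero.mp hp.symm with h | h
          · exact absurd h (ne_of_gt hσx)
          · exact h
        have hM0 : M = u x₀ 0 := by rw [hM, hzero]
        linarith
      · -- v₀ > 0 : a < x₀
        have hax₀ : a < x₀ := by
          rcases lt_or_eq_of_le hx₀.1 with h | h; · exact h
          exfalso
          have := hin_a v₀ ⟨hposv, hv₀.2⟩
          rw [h] at this; rw [hM, this] at hMpos; exact lt_irrefl 0 hMpos
        have hud0 : 0 ≤ ud x₀ v₀ :=
          deriv_nonneg_of_max_left hx₀ hax₀ (hud x₀ hx₀ v₀ hv₀)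
            (fun x hx => hle x hx v₀ hv₀)
        have hp := hpde x₀ hx₀ v₀ hv₀
        have h1 : 0 ≤ v₀ * ud x₀ v₀ := mul_nonneg hposv.le hud0
        rw [hp] at h1
        have := hσε x₀ hx₀
        nlinarith
    have hle' : (1 / 2) * (∫ v' in (-1 : ℝ)..1, u x₀ v') ≤ M := by
      have := hIbound x₀ hx₀; linarith
    linarith
  -- Step B : u x₀ 1 = M
  have hu1 : u x₀ 1 = M := by
    by_contra hne
    have hlt : u x₀ 1 < M := lt_of_le_of_ne (hle x₀ hx₀ 1 hone) hne
    have := intervalIntegral.integral_lt_integral_of_continuousOn_of_le_of_exists_lt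
      (by norm_num : (-1 : ℝ) < 1) (hslice_v x₀ hx₀) continuousOn_const
      (fun v hv => hle x₀ hx₀ v ⟨hv.1.le, hv.2⟩) ⟨1, hone, hlt⟩
    simp only [intervalIntegral.integral_const, smul_eq_mul] at this
    have h2 : (∫ v' in (-1 : ℝ)..1, u x₀ v') < 2 * M := by linarith [this]
    linarith [hIeq]
  -- Step C : Gronwall on [a, x₀] for v = 1
  obtain ⟨xc, hxc, hxcmax⟩ := isCompact_Icc.exists_isMaxOn (Set.nonempty_Icc.2 hab.le) hσ_cont
  set C := σ xc / ε with hC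
  have hCpos : 0 < C := hσε xc hxc
  have hCle : ∀ x ∈ Set.Icc a b, σ x / ε ≤ C :=
    fun x hx => div_le_div_of_nonneg_right (hxcmax hx) hε.le
  set h : ℝ → ℝ := fun x => (M - u x 1) * Real.exp (C * x) with hh
  have hsub : Set.Icc a x₀ ⊆ Set.Icc a b := Set.Icc_subset_Icc le_rfl hx₀.2
  have hmono : MonotoneOn h (Set.Icc a x₀) := by
    apply monotoneOn_of_hasDerivWithinAt_nonneg (convex_Icc a x₀)
      (f' := fun x => (0 - ud x 1) * Real.exp (C * x) + (M - u x 1) * (Real.exp (C * x) * C))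
    · exact ((continuousOn_const.sub ((hslice_x 1 hone).mono hsub)).mul
        (Real.continuous_exp.comp (continuous_const.mul continuous_id)).continuousOn)
    · intro x hx
      rw [interior_Icc] at hx
      have hxab : x ∈ Set.Icc a b := hsub ⟨hx.1.le, hx.2.le⟩
      have hd1 : HasDerivWithinAt (fun x' => u x' 1) (ud x 1) (interior (Set.Icc a x₀)) x :=
        (hud x hxab 1 hone).mono (by rw [interior_Icc]; exact fun y hy => hsub ⟨hy.1.le, hy.2.le⟩)
      have hd2 : HasDerivWithinAt (fun x' => Real.exp (C * x')) (Real.exp (C * x) * C)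
          (interior (Set.Icc a x₀)) x := by
        have := ((hasDerivAt_id x).const_mul C).exp
        simp only [mul_one] at this
        exact this.hasDerivWithinAt
      exact ((hasDerivWithinAt_const _ _ M).sub hd1).mul hd2
    · intro x hx
      rw [interior_Icc] at hx
      have hxab : x ∈ Set.Icc a b := hsub ⟨hx.1.le, hx.2.le⟩
      have hp := hpde x hxab 1 hone
      rw [one_mul] at hp
      have hub : (1 / 2) * (∫ v' in (-1 : ℝ)..1, u x v') ≤ M := by
        have := hIbound x hxab; linarith
      have hfle : u x 1 ≤ M := hle x hxab 1 hone
      have hσx : 0 < σ x / ε := hσε x hxab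
      have hCx : σ x / ε ≤ C := hCle x hxab
      have hexp : 0 < Real.exp (C * x) := Real.exp_pos _
      rw [hp]
      have h1 : σ x / ε * (((1 / 2) * ∫ v' in (-1 : ℝ)..1, u x v') - u x 1)
          ≤ σ x / ε * (M - u x 1) := mul_le_mul_of_nonneg_left (by linarith) hσx.le
      have h2 : σ x / ε * (M - u x 1) ≤ C * (M - u x 1) :=
        mul_le_mul_of_nonneg_right hCx (by linarith)
      have h3 : 0 ≤ Real.exp (C * x) *
          (C * (M - u x 1) - σ x / ε * (((1 / 2) * ∫ v' in (-1 : ℝ)..1, u x v') - u x 1)) :=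
        mul_nonneg hexp.le (by linarith)
      nlinarith [h3]
  have hax₀ : a ∈ Set.Icc a x₀ := ⟨le_rfl, hx₀.1⟩
  have hx₀x₀ : x₀ ∈ Set.Icc a x₀ := ⟨hx₀.1, le_rfl⟩
  have := hmono hax₀ hx₀x₀ hx₀.1
  have hha : h a = M * Real.exp (C * a) := by
    rw [hh]; simp [hin_a 1 ⟨one_pos, le_rfl⟩]
  have hhx₀ : h x₀ = 0 := by rw [hh]; simp [hu1]
  rw [hha, hhx₀] at this
  nlinarith [Real.exp_pos (C * a)]

/-- Uniqueness for the 1D RTE boundary value problem: if `u` solves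
`v ∂ₓu = (σ(x)/ε) L u` on `[a,b] × [−1,1]` with `σ > 0` and homogeneous inflow boundary
conditions (`u(a,v) = 0` for `v ∈ (0,1]`, `u(b,v) = 0` for `v ∈ [−1,0)`), then `u ≡ 0`. -/
theorem rte_uniqueness (a b ε : ℝ) (hab : a < b) (hε : 0 < ε)
    (σ : ℝ → ℝ) (hσ_cont : ContinuousOn σ (Set.Icc a b))
    (hσ_pos : ∀ x ∈ Set.Icc a b, 0 < σ x)
    (u ud : ℝ → ℝ → ℝ)
    (hu_cont : ContinuousOn (fun q : ℝ × ℝ => u q.1 q.2)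
      (Set.Icc a b ×ˢ Set.Icc (-1 : ℝ) 1))
    (hud : ∀ x ∈ Set.Icc a b, ∀ v ∈ Set.Icc (-1 : ℝ) 1,
      HasDerivWithinAt (fun x' => u x' v) (ud x v) (Set.Icc a b) x)
    (hud_cont : ContinuousOn (fun q : ℝ × ℝ => ud q.1 q.2)
      (Set.Icc a b ×ˢ Set.Icc (-1 : ℝ) 1))
    (hpde : ∀ x ∈ Set.Icc a b, ∀ v ∈ Set.Icc (-1 : ℝ) 1,
      v * ud x v = (σ x / ε) * (((1 / 2) * ∫ v' in (-1 : ℝ)..1, u x v') - u x v))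
    (hin_a : ∀ v ∈ Set.Ioc (0 : ℝ) 1, u a v = 0)
    (hin_b : ∀ v ∈ Set.Ico (-1 : ℝ) 0, u b v = 0) :
    ∀ x ∈ Set.Icc a b, ∀ v ∈ Set.Icc (-1 : ℝ) 1, u x v = 0 := by
  intro x hx v hv
  have h1 : u x v ≤ 0 :=
    rte_nonpos a b ε hab hε σ hσ_cont hσ_pos u ud hu_cont hud hpde hin_a hin_b x hx v hv
  have h2 : -(u x v) ≤ 0 := by
    refine rte_nonpos a b ε hab hε σ hσ_cont hσ_pos (fun x v => -(u x v))
      (fun x v => -(ud x v)) hu_cont.neg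
      (fun x hx v hv => (hud x hx v hv).neg) ?_
      (fun v hv => by rw [hin_a v hv, neg_zero])
      (fun v hv => by rw [hin_b v hv, neg_zero]) x hx v hv
    intro x hx v hv
    have hp := hpde x hx v hv
    rw [intervalIntegral.integral_neg]
    ring_nf
    ring_nf at hp
    linarith
  linarith
end
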